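/- arXiv:1703.07304 — 2 statements merged into one kernel-verified Lean document; each statement's English description precedes it below -/
import Mathlib

section
/- Let A be an associative k-algebra. Then QSh(A) := ⊕_{n≥0} A^{⊗n}, equipped with the quasi-shuffle product ⧢ and the deconcatenation coproduct Δ, is a conilpotent unital bialgebra (hence a Hopf algebra): ⧢ is associative with unit the empty word 1, Δ is coassociative with counit η annihilating words of positive length, Δ is an algebra morphism for ⧢, and the reduced coproduct is locally conilpotent. Moreover, if A is commutative, then ⧢ is commutative. -/
open scoped TensorProduct
open TensorProduct

noncomputable section

namespace QShPaper

variable (k : Type*) [Field k]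

/-! ### Convolution algebra of linear maps from a coalgebra to an algebra -/

section Conv

variable {Q : Type*} [AddCommGroup Q] [Module k Q]
variable (A : Type*) [Ring A] [Algebra k A]

/-- The convolution product `f * g := m_A ∘ (f ⊗ g) ∘ Δ` associated to a
comultiplication `com` on `Q`. -/
def conv (com : Q →ₗ[k] Q ⊗[k] Q) (f g : Q →ₗ[k] A) : Q →ₗ[k] A :=
  LinearMap.mul' k A ∘ₗ TensorProduct.map f g ∘ₗ com

/-- The unit `u_A ∘ η` of the convolution product. -/
def convUnit (cou : Q →ₗ[k] k) : Q →ₗ[k] A := Algebra.linearMap k A ∘ₗ cou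

/-- Convolution powers `f^{*n}`, with `f^{*0}` the convolution unit. -/
def convPow (com : Q →ₗ[k] Q ⊗[k] Q) (cou : Q →ₗ[k] k) (f : Q →ₗ[k] A) : ℕ → (Q →ₗ[k] A)
  | 0 => convUnit k A cou
  | n + 1 => conv k A com f (convPow com cou f n)

end Conv

/-! ### Iterated (reduced) coproducts, conilpotency -/

section Red

variable {Q : Type*} [AddCommGroup Q] [Module k Q]

/-- `Q ≃ Q^{⊗1}`. -/
def toPow1 : Q ≃ₗ[k] ⨂[k]^1 Q := (PiTensorProduct.subsingletonEquiv (R := k) (s := fun _ : Fin 1 => Q) (0 : Fin 1)).symm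

variable (one : Q) (com : Q →ₗ[k] Q ⊗[k] Q)

/-- The reduced coproduct `Δ'(h) := Δ(h) − 1 ⊗ h − h ⊗ 1`. -/
def redComul : Q →ₗ[k] Q ⊗[k] Q :=
  com - TensorProduct.mk k Q Q one - (TensorProduct.mk k Q Q).flip one

/-- Iterated reduced coproducts: `redIter n = Δ'^{[n+1]} : Q → Q^{⊗(n+1)}`,
with `Δ'^{[1]} = Id` and `Δ'^{[n+1]} = (Id ⊗ Δ'^{[n]}) ∘ Δ'`. -/
def redIter : (n : ℕ) → Q →ₗ[k] ⨂[k]^(n+1) Q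
  | 0 => (toPow1 k).toLinearMap
  | n + 1 =>
      (TensorPower.cast k Q (show 1 + (n+1) = n+1+1 by omega)).toLinearMap ∘ₗ
        (TensorPower.mulEquiv (R := k) (M := Q) (n := 1) (m := n+1)).toLinearMap ∘ₗ
          TensorProduct.map (toPow1 k).toLinearMap (redIter n) ∘ₗ redComul k one com

/-- Iterated coproducts: `fullIter n = Δ^{[n+1]} : Q → Q^{⊗(n+1)}`,
with `Δ^{[1]} = Id` and `Δ^{[n+1]} = (Id ⊗ Δ^{[n]}) ∘ Δ`. -/
def fullIter : (n : ℕ) → Q →ₗ[k] ⨂[k]^(n+1) Q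
  | 0 => (toPow1 k).toLinearMap
  | n + 1 =>
      (TensorPower.cast k Q (show 1 + (n+1) = n+1+1 by omega)).toLinearMap ∘ₗ
        (TensorPower.mulEquiv (R := k) (M := Q) (n := 1) (m := n+1)).toLinearMap ∘ₗ
          TensorProduct.map (toPow1 k).toLinearMap (fullIter n) ∘ₗ com

/-- A (coaugmented) coalgebra is (locally) conilpotent if every element of the kernel of
the counit. is annihilated by some iterated reduced coproduct. -/
def IsConilpotent (cou : Q →ₗ[k] k) : Prop :=
  ∀ x ∈ LinearMap.ker cou, ∃ n, redIter k one com n x = 0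

end Red

/-- `m_A^{[n]} ∘ f^{⊗n} : H^{⊗n} → A`. -/
def prodPow {H : Type*} [AddCommGroup H] [Module k H] (A : Type*) [Ring A] [Algebra k A]
    (f : H →ₗ[k] A) (n : ℕ) : (⨂[k]^n H) →ₗ[k] A :=
  PiTensorProduct.lift ((MultilinearMap.mkPiAlgebraFin k n A).compLinearMap fun _ => f)


/-- A model of the quasi-shuffle Hopf algebra `QSh(A) = ⊕_{n≥0} A^{⊗n}` over a
(possibly non-unital) associative algebra `A`: `emp` is the empty word, `cons` is
prepending of a letter, `mul` is the quasi-shuffle product `⧢`, `comul` the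
deconcatenation coproduct and `counit` the counit. -/
structure QShModel (A Q : Type*) [NonUnitalRing A] [Module k A]
    [SMulCommClass k A A] [IsScalarTower k A A] [AddCommGroup Q] [Module k Q] where
  emp : Q
  cons : A →ₗ[k] Q →ₗ[k] Q
  mul : Q →ₗ[k] Q →ₗ[k] Q
  comul : Q →ₗ[k] Q ⊗[k] Q
  counit : Q →ₗ[k] k
  /-- words span `QSh(A)` -/
  span_words : Submodule.span k
    (Set.range fun w : List A => w.foldr (fun a u => cons a u) emp) = ⊤
  /-- `QSh(A) ≅ k ⊕ (A ⊗ QSh(A))` via `(c, a ⊗ u) ↦ c • 1 + a·u` -/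
  theta_bij : Function.Bijective
    ((LinearMap.toSpanSingleton k Q emp).coprod (TensorProduct.lift cons))
  mul_emp_left : ∀ u, mul emp u = u
  mul_emp_right : ∀ u, mul u emp = u
  /-- the quasi-shuffle recursion `av ⧢ bw = a(v ⧢ bw) + b(av ⧢ w) + (a·_A b)(v ⧢ w)` -/
  mul_cons : ∀ (a b : A) (v w : Q),
    mul (cons a v) (cons b w) =
      cons a (mul v (cons b w)) + cons b (mul (cons a v) w) + cons (a * b) (mul v w)
  comul_emp : comul emp = emp ⊗ₜ[k] emp
  /-- the deconcatenation recursion -/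
  comul_cons : ∀ (a : A) (u : Q),
    comul (cons a u) = emp ⊗ₜ[k] (cons a u) + (TensorProduct.map (cons a) LinearMap.id) (comul u)
  counit_emp : counit emp = 1
  counit_cons : ∀ (a : A) (u : Q), counit (cons a u) = 0

namespace QShModel

variable {k}
variable {A Q : Type*} [NonUnitalRing A] [Module k A]
    [SMulCommClass k A A] [IsScalarTower k A A] [AddCommGroup Q] [Module k Q]

/-- The word `a_1…a_n ∈ QSh(A)`. -/
def ofWord (M : QShModel k A Q) (w : List A) : Q := w.foldr (fun a u => M.cons a u) M.emp

/-- The collapse `H^{⊗(n+1)} → QSh(A)`, `x_1 ⊗ … ⊗ x_{n+1} ↦ c(x_1)…c(x_{n+1})`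
(a word of length `n+1`) induced by a linear map `c : H → A`. -/
def wordMap (M : QShModel k A Q) {H : Type*} [AddCommGroup H] [Module k H]
    (c : H →ₗ[k] A) : (n : ℕ) → (⨂[k]^(n+1) H) →ₗ[k] Q
  | 0 => ((M.cons ∘ₗ c).flip M.emp) ∘ₗ (toPow1 k).symm.toLinearMap
  | n + 1 =>
      TensorProduct.lift (M.cons ∘ₗ c) ∘ₗ
        TensorProduct.map (toPow1 k).symm.toLinearMap (M.wordMap c n) ∘ₗ
          (TensorPower.mulEquiv (R := k) (M := H) (n := 1) (m := n+1)).symm.toLinearMap ∘ₗ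
            (TensorPower.cast k H (show n+1+1 = 1+(n+1) by omega)).toLinearMap

/-- `Ψ = QSh(c) ∘ ι : H → QSh(A)`, i.e. `Ψ(1) = 1` and, for `h` in the kernel of the
counit, `Ψ(h) = Σ_{n≥1} c^{⊗n}(Δ'^{[n]}(h))` (a finite sum, each term being viewed
as a word of length `n`). -/
def IotaComp (M : QShModel k A Q) {H : Type*} [AddCommGroup H] [Module k H]
    (oneH : H) (com : H →ₗ[k] H ⊗[k] H) (cou : H →ₗ[k] k)
    (c : H →ₗ[k] A) (Ψ : H →ₗ[k] Q) : Prop :=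
  Ψ oneH = M.emp ∧
    ∀ h ∈ LinearMap.ker cou, ∃ N, ∀ n ≥ N,
      Ψ h = ∑ i ∈ Finset.range (n+1), M.wordMap c i (redIter k oneH com i h)

end QShModel
end QShPaper

namespace QShPaper
namespace QShModel

section Aux

variable {k : Type*} [Field k]
variable {A Q : Type*} [NonUnitalRing A] [Module k A]
    [SMulCommClass k A A] [IsScalarTower k A A] [AddCommGroup Q] [Module k Q]
variable (M : QShModel k A Q)

lemma ofWord_nil : M.ofWord [] = M.emp := rfl

lemma ofWord_cons (a : A) (w : List A) : M.ofWord (a :: w) = M.cons a (M.ofWord w) := rfl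

lemma ext_words {X : Type*} [AddCommGroup X] [Module k X] {F G : Q →ₗ[k] X}
    (h : ∀ w : List A, F (M.ofWord w) = G (M.ofWord w)) : F = G := by
  apply LinearMap.ext_on M.span_words
  rintro x ⟨w, rfl⟩
  exact h w

lemma ext_words₂ {X : Type*} [AddCommGroup X] [Module k X] {F G : Q →ₗ[k] Q →ₗ[k] X}
    (h : ∀ v w : List A, F (M.ofWord v) (M.ofWord w) = G (M.ofWord v) (M.ofWord w)) :
    F = G :=
  M.ext_words fun v => M.ext_words fun w => h v w

/-! ### Associativity -/

lemma mul_assoc_words : ∀ n : ℕ, ∀ u v w : List A,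
    u.length + v.length + w.length ≤ n →
    M.mul (M.mul (M.ofWord u) (M.ofWord v)) (M.ofWord w)
      = M.mul (M.ofWord u) (M.mul (M.ofWord v) (M.ofWord w)) := by
  intro n
  induction n with
  | zero =>
    intro u v w h
    have hu : u = [] := List.length_eq_zero_iff.mp (by omega)
    subst hu
    simp [ofWord_nil, M.mul_emp_left]
  | succ n ih =>
    rintro (_ | ⟨a, U⟩) v w h
    · simp [ofWord_nil, M.mul_emp_left]
    rcases v with _ | ⟨b, V⟩
    · simp [ofWord_nil, M.mul_emp_right, M.mul_emp_left]
    rcases w with _ | ⟨c, W⟩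
    · simp [ofWord_nil, M.mul_emp_right]
    simp only [List.length_cons] at h
    have e1 := ih U (b::V) (c::W) (by simp only [List.length_cons]; omega)
    have e2 := ih (a::U) (b::V) W (by simp only [List.length_cons]; omega)
    have e3 := ih (a::U) V (c::W) (by simp only [List.length_cons]; omega)
    have e4 := ih U V (c::W) (by simp only [List.length_cons]; omega)
    have e5 := ih U (b::V) W (by simp only [List.length_cons]; omega)
    have e6 := ih (a::U) V W (by simp only [List.length_cons]; omega)
    have e7 := ih U V W (by omega)
    simp only [ofWord_cons] at e1 e2 e3 e4 e5 e6 e7 ⊢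
    simp only [M.mul_cons, map_add, LinearMap.add_apply]
    rw [e1, e3, e4, e5, e6, e7, ← e2]
    simp only [M.mul_cons, map_add, LinearMap.add_apply, mul_assoc]
    abel

/-! ### Commutativity -/

lemma mul_comm_words (hA : ∀ a b : A, a * b = b * a) :
    ∀ n : ℕ, ∀ u v : List A, u.length + v.length ≤ n →
    M.mul (M.ofWord u) (M.ofWord v) = M.mul (M.ofWord v) (M.ofWord u) := by
  intro n
  induction n with
  | zero =>
    intro u v h
    have hu : u = [] := List.length_eq_zero_iff.mp (by omega)
    have hv : v = [] := List.length_eq_zero_iff.mp (by omega)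
    subst hu; subst hv; rfl
  | succ n ih =>
    rintro (_ | ⟨a, U⟩) v h
    · simp [ofWord_nil, M.mul_emp_left, M.mul_emp_right]
    rcases v with _ | ⟨b, V⟩
    · simp [ofWord_nil, M.mul_emp_left, M.mul_emp_right]
    simp only [List.length_cons] at h
    have c1 := ih U (b::V) (by simp only [List.length_cons]; omega)
    have c2 := ih (a::U) V (by simp only [List.length_cons]; omega)
    have c3 := ih U V (by omega)
    simp only [ofWord_cons] at c1 c2 c3 ⊢
    rw [M.mul_cons, M.mul_cons, c1, c2, c3, hA a b]
    abel

/-! ### Counit laws -/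

lemma counit_ofWord_ne (w : List A) (hw : w ≠ []) : M.counit (M.ofWord w) = 0 := by
  cases w with
  | nil => exact absurd rfl hw
  | cons a w => simp [ofWord_cons, M.counit_cons]

lemma rTensor_counit_map_cons (a : A) (t : Q ⊗[k] Q) :
    M.counit.rTensor Q (TensorProduct.map (M.cons a) LinearMap.id t) = 0 := by
  induction t using TensorProduct.induction_on with
  | zero => simp
  | tmul x y =>
    simp [TensorProduct.map_tmul, LinearMap.rTensor_tmul, M.counit_cons,
      TensorProduct.zero_tmul]
  | add s t hs ht => simp [map_add, hs, ht]

lemma counit_rTensor_comul : M.counit.rTensor Q ∘ₗ M.comul = TensorProduct.mk k k Q 1 := by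
  apply M.ext_words
  intro w
  cases w with
  | nil =>
    simp [ofWord_nil, M.comul_emp, M.counit_emp]
  | cons a w =>
    simp only [LinearMap.comp_apply, ofWord_cons, M.comul_cons, map_add,
      M.rTensor_counit_map_cons, LinearMap.rTensor_tmul, M.counit_emp, add_zero,
      TensorProduct.mk_apply]

lemma lTensor_counit_map_cons (a : A) (t : Q ⊗[k] Q) :
    M.counit.lTensor Q (TensorProduct.map (M.cons a) LinearMap.id t)
      = TensorProduct.map (M.cons a) (LinearMap.id : k →ₗ[k] k)
          (M.counit.lTensor Q t) := by
  induction t using TensorProduct.induction_on with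
  | zero => simp
  | tmul x y => simp
  | add s t hs ht => simp [map_add, hs, ht]

lemma counit_lTensor_comul :
    M.counit.lTensor Q ∘ₗ M.comul = (TensorProduct.mk k Q k).flip 1 := by
  apply M.ext_words
  intro w
  induction w with
  | nil => simp [ofWord_nil, M.comul_emp, M.counit_emp]
  | cons a w ih =>
    have ih' : M.counit.lTensor Q (M.comul (M.ofWord w)) = M.ofWord w ⊗ₜ[k] (1 : k) := by
      simpa using ih
    simp only [LinearMap.comp_apply, ofWord_cons, M.comul_cons, map_add,
      M.lTensor_counit_map_cons, ih', LinearMap.lTensor_tmul, M.counit_cons,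
      TensorProduct.tmul_zero, zero_add, TensorProduct.map_tmul,
      LinearMap.flip_apply, TensorProduct.mk_apply, LinearMap.id_coe, id_eq]

/-! ### Coassociativity -/

lemma assoc_map_fst (f : Q →ₗ[k] Q) (s : Q ⊗[k] Q) (y : Q) :
    TensorProduct.assoc k Q Q Q ((TensorProduct.map f LinearMap.id s) ⊗ₜ[k] y)
      = TensorProduct.map f (LinearMap.id : Q ⊗[k] Q →ₗ[k] Q ⊗[k] Q)
          (TensorProduct.assoc k Q Q Q (s ⊗ₜ[k] y)) := by
  induction s using TensorProduct.induction_on with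
  | zero => simp
  | tmul x₁ x₂ => simp
  | add s₁ s₂ h1 h2 => simp [TensorProduct.add_tmul, h1, h2]

lemma coassoc_aux (a : A) (t : Q ⊗[k] Q) :
    TensorProduct.assoc k Q Q Q
        (M.comul.rTensor Q (TensorProduct.map (M.cons a) LinearMap.id t))
      = M.emp ⊗ₜ[k] (TensorProduct.map (M.cons a) LinearMap.id t)
        + TensorProduct.map (M.cons a) (LinearMap.id : Q ⊗[k] Q →ₗ[k] Q ⊗[k] Q)
            (TensorProduct.assoc k Q Q Q (M.comul.rTensor Q t)) := by
  induction t using TensorProduct.induction_on with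
  | zero => simp
  | tmul x y =>
    simp only [TensorProduct.map_tmul, LinearMap.id_coe, id_eq, LinearMap.rTensor_tmul,
      M.comul_cons, TensorProduct.add_tmul, map_add, TensorProduct.assoc_tmul,
      assoc_map_fst]
  | add s t hs ht =>
    simp only [map_add, hs, ht, TensorProduct.tmul_add]
    abel

lemma map_lTensor_aux (f : Q →ₗ[k] Q) (g : Q →ₗ[k] Q ⊗[k] Q) (t : Q ⊗[k] Q) :
    TensorProduct.map f (LinearMap.id : Q ⊗[k] Q →ₗ[k] Q ⊗[k] Q) (g.lTensor Q t)
      = TensorProduct.map f g t := by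
  induction t using TensorProduct.induction_on with
  | zero => simp
  | tmul x y => simp
  | add s t hs ht => simp [map_add, hs, ht]

lemma lTensor_map_aux (f : Q →ₗ[k] Q) (g : Q →ₗ[k] Q ⊗[k] Q) (t : Q ⊗[k] Q) :
    g.lTensor Q (TensorProduct.map f LinearMap.id t) = TensorProduct.map f g t := by
  induction t using TensorProduct.induction_on with
  | zero => simp
  | tmul x y => simp
  | add s t hs ht => simp [map_add, hs, ht]

lemma coassoc :
    TensorProduct.assoc k Q Q Q ∘ₗ M.comul.rTensor Q ∘ₗ M.comul =
      M.comul.lTensor Q ∘ₗ M.comul := by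
  apply M.ext_words
  intro w
  induction w with
  | nil => simp [ofWord_nil, M.comul_emp]
  | cons a w ih =>
    have ih' : TensorProduct.assoc k Q Q Q (M.comul.rTensor Q (M.comul (M.ofWord w)))
        = M.comul.lTensor Q (M.comul (M.ofWord w)) := by
      simpa using ih
    simp only [LinearMap.comp_apply, LinearEquiv.coe_coe, ofWord_cons, M.comul_cons,
      map_add, LinearMap.rTensor_tmul, LinearMap.lTensor_tmul, M.comul_emp,
      TensorProduct.assoc_tmul, M.coassoc_aux, ih', map_lTensor_aux,
      lTensor_map_aux, TensorProduct.tmul_add]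
    abel

end Aux

/-! ### The coproduct is multiplicative -/

/-- The quasi-shuffle product on `QSh(A) ⊗ QSh(A)`. -/
def mul2 {k : Type*} [Field k] {A Q : Type*} [NonUnitalRing A] [Module k A]
    [SMulCommClass k A A] [IsScalarTower k A A] [AddCommGroup Q] [Module k Q]
    (M : QShModel k A Q) : (Q ⊗[k] Q) →ₗ[k] (Q ⊗[k] Q) →ₗ[k] (Q ⊗[k] Q) :=
  TensorProduct.homTensorHomMap (RingHom.id k) Q Q Q Q ∘ₗ TensorProduct.map M.mul M.mul

section Aux2

variable {k : Type*} [Field k]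
variable {A Q : Type*} [NonUnitalRing A] [Module k A]
    [SMulCommClass k A A] [IsScalarTower k A A] [AddCommGroup Q] [Module k Q]
variable (M : QShModel k A Q)

lemma mul2_tmul (x y : Q) :
    M.mul2 (x ⊗ₜ[k] y) = TensorProduct.map (M.mul x) (M.mul y) := by
  simp [mul2, TensorProduct.homTensorHomMap_apply]

lemma mul2_tmul_tmul (x y x' y' : Q) :
    M.mul2 (x ⊗ₜ[k] y) (x' ⊗ₜ[k] y') = M.mul x x' ⊗ₜ[k] M.mul y y' := by
  simp [M.mul2_tmul]

lemma mul_emp_left' : M.mul M.emp = LinearMap.id :=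
  LinearMap.ext M.mul_emp_left

lemma mul2_emp_left (t : Q ⊗[k] Q) : M.mul2 (M.emp ⊗ₜ[k] M.emp) t = t := by
  rw [M.mul2_tmul, M.mul_emp_left', TensorProduct.map_id, LinearMap.id_apply]

lemma mul2_emp_right (t : Q ⊗[k] Q) : M.mul2 t (M.emp ⊗ₜ[k] M.emp) = t := by
  induction t using TensorProduct.induction_on with
  | zero => simp
  | tmul x y => simp [M.mul2_tmul_tmul, M.mul_emp_right]
  | add s t hs ht => simp [map_add, LinearMap.add_apply, hs, ht]

lemma mul2_aux1 (a : A) (p : Q) (t : Q ⊗[k] Q) :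
    TensorProduct.map (M.cons a) LinearMap.id (M.mul2 t (M.emp ⊗ₜ[k] p))
      = M.mul2 (TensorProduct.map (M.cons a) LinearMap.id t) (M.emp ⊗ₜ[k] p) := by
  induction t using TensorProduct.induction_on with
  | zero => simp
  | tmul x y => simp [M.mul2_tmul_tmul, M.mul_emp_right]
  | add s t hs ht => simp [map_add, LinearMap.add_apply, hs, ht]

lemma mul2_aux2 (b : A) (p : Q) (s : Q ⊗[k] Q) :
    TensorProduct.map (M.cons b) LinearMap.id (M.mul2 (M.emp ⊗ₜ[k] p) s)
      = M.mul2 (M.emp ⊗ₜ[k] p) (TensorProduct.map (M.cons b) LinearMap.id s) := by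
  induction s using TensorProduct.induction_on with
  | zero => simp
  | tmul x y => simp [M.mul2_tmul_tmul, M.mul_emp_left]
  | add s t hs ht => simp [map_add, hs, ht]

lemma mul2_aux3 (a b : A) (t s : Q ⊗[k] Q) :
    TensorProduct.map (M.cons a) LinearMap.id
        (M.mul2 t (TensorProduct.map (M.cons b) LinearMap.id s))
      + TensorProduct.map (M.cons b) LinearMap.id
          (M.mul2 (TensorProduct.map (M.cons a) LinearMap.id t) s)
      + TensorProduct.map (M.cons (a * b)) LinearMap.id (M.mul2 t s)
      = M.mul2 (TensorProduct.map (M.cons a) LinearMap.id t)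
          (TensorProduct.map (M.cons b) LinearMap.id s) := by
  induction t using TensorProduct.induction_on with
  | zero => simp
  | tmul x y =>
    induction s using TensorProduct.induction_on with
    | zero => simp
    | tmul x' y' =>
      simp only [TensorProduct.map_tmul, LinearMap.id_coe, id_eq, M.mul2_tmul_tmul]
      rw [M.mul_cons]
      simp only [TensorProduct.add_tmul]
    | add s₁ s₂ h1 h2 =>
      simp only [map_add, LinearMap.add_apply] at h1 h2 ⊢
      rw [← h1, ← h2]
      abel
  | add t₁ t₂ h1 h2 =>
    simp only [map_add, LinearMap.add_apply] at h1 h2 ⊢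
    rw [← h1, ← h2]
    abel

lemma comul_mul_words : ∀ n : ℕ, ∀ u v : List A, u.length + v.length ≤ n →
    M.comul (M.mul (M.ofWord u) (M.ofWord v))
      = M.mul2 (M.comul (M.ofWord u)) (M.comul (M.ofWord v)) := by
  intro n
  induction n with
  | zero =>
    intro u v h
    have hu : u = [] := List.length_eq_zero_iff.mp (by omega)
    subst hu
    simp [ofWord_nil, M.mul_emp_left, M.comul_emp, M.mul2_emp_left]
  | succ n ih =>
    rintro (_ | ⟨a, U⟩) v h
    · simp [ofWord_nil, M.mul_emp_left, M.comul_emp, M.mul2_emp_left]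
    rcases v with _ | ⟨b, V⟩
    · simp [ofWord_nil, M.mul_emp_right, M.comul_emp, M.mul2_emp_right]
    simp only [List.length_cons] at h
    have j1 := ih U (b::V) (by simp only [List.length_cons]; omega)
    have j2 := ih (a::U) V (by simp only [List.length_cons]; omega)
    have j3 := ih U V (by omega)
    simp only [ofWord_cons] at j1 j2 j3 ⊢
    simp only [M.comul_cons, map_add, LinearMap.add_apply] at j1 j2
    rw [M.mul_cons]
    simp only [map_add, M.comul_cons]
    rw [j1, j2, j3]
    simp only [map_add, LinearMap.add_apply, M.mul2_tmul_tmul, M.mul_emp_left,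
      M.mul_cons, TensorProduct.tmul_add]
    rw [M.mul2_aux1, M.mul2_aux2,
      ← M.mul2_aux3 a b (M.comul (M.ofWord U)) (M.comul (M.ofWord V))]
    abel

/-! ### Counit is multiplicative -/

lemma counit_mul_words (u v : List A) :
    M.counit (M.mul (M.ofWord u) (M.ofWord v))
      = M.counit (M.ofWord u) * M.counit (M.ofWord v) := by
  cases u with
  | nil => simp [ofWord_nil, M.mul_emp_left, M.counit_emp]
  | cons a U =>
    cases v with
    | nil => simp [ofWord_nil, M.mul_emp_right, M.counit_emp]
    | cons b V =>
      simp [ofWord_cons, M.mul_cons, map_add, M.counit_cons]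

/-! ### Conilpotency -/

lemma comul_ofWord (w : List A) :
    M.comul (M.ofWord w)
      = ∑ r ∈ Finset.range (w.length + 1),
          M.ofWord (w.take r) ⊗ₜ[k] M.ofWord (w.drop r) := by
  induction w with
  | nil => simp [ofWord_nil, M.comul_emp]
  | cons a w ih =>
    rw [ofWord_cons, M.comul_cons, ih, map_sum, List.length_cons,
      Finset.sum_range_succ' _ (w.length + 1)]
    simp only [TensorProduct.map_tmul, LinearMap.id_coe, id_eq, List.take_succ_cons,
      List.drop_succ_cons, List.take_zero, List.drop_zero, ofWord_cons, ofWord_nil]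
    abel

lemma redComul_ofWord (a : A) (w : List A) :
    redComul k M.emp M.comul (M.ofWord (a :: w))
      = ∑ r ∈ Finset.range w.length,
          M.ofWord ((a :: w).take (r+1)) ⊗ₜ[k] M.ofWord ((a :: w).drop (r+1)) := by
  have h := M.comul_ofWord (a :: w)
  rw [List.length_cons] at h
  rw [redComul]
  simp only [LinearMap.sub_apply, TensorProduct.mk_apply, LinearMap.flip_apply]
  rw [h, Finset.sum_range_succ, Finset.sum_range_succ' _ w.length]
  have h1 : (a :: w).take 0 = [] := rfl
  have h2 : (a :: w).drop 0 = a :: w := rfl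
  have h3 : (a :: w).take (w.length + 1) = a :: w := by
    rw [← List.length_cons (a := a) (as := w)]; exact List.take_length
  have h4 : (a :: w).drop (w.length + 1) = [] := by
    rw [← List.length_cons (a := a) (as := w)]; exact List.drop_length
  rw [h1, h2, h3, h4, ofWord_nil]
  abel

lemma redIter_words : ∀ (n : ℕ) (w : List A), 1 ≤ w.length → w.length ≤ n →
    redIter k M.emp M.comul n (M.ofWord w) = 0 := by
  intro n
  induction n with
  | zero => intro w h1 h2; omega
  | succ n ih =>
    rintro (_ | ⟨a, w⟩) h1 h2
    · simp at h1
    rw [List.length_cons] at h2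
    have hz : TensorProduct.map ((toPow1 k).toLinearMap) (redIter k M.emp M.comul n)
        (redComul k M.emp M.comul (M.ofWord (a :: w))) = 0 := by
      rw [M.redComul_ofWord a w, map_sum]
      apply Finset.sum_eq_zero
      intro r hr
      have hr' := Finset.mem_range.mp hr
      rw [TensorProduct.map_tmul, ih ((a::w).drop (r+1)) ?_ ?_, TensorProduct.tmul_zero]
      · rw [List.length_drop, List.length_cons]; omega
      · rw [List.length_drop, List.length_cons]; omega
    rw [redIter]
    simp only [LinearMap.comp_apply, hz, map_zero]

lemma conilpotent : IsConilpotent k M.emp M.comul M.counit := by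
  intro x hx
  have hx' : x ∈ Submodule.span k (Set.range fun w : List A => M.ofWord w) := by
    unfold ofWord
    rw [M.span_words]
    exact Submodule.mem_top
  rw [Finsupp.mem_span_range_iff_exists_finsupp] at hx'
  obtain ⟨c, hc⟩ := hx'
  rw [LinearMap.mem_ker] at hx
  have h0 : c [] = 0 := by
    rw [← hc, map_finsuppSum] at hx
    rw [← hx, Finsupp.sum]
    rw [Finset.sum_eq_single ([] : List A)]
    · simp [ofWord_nil, M.counit_emp]
    · intro w hw hne
      simp [map_smul, M.counit_ofWord_ne w hne]
    · intro h
      simp [Finsupp.notMem_support_iff.mp h]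
  refine ⟨c.support.sup List.length, ?_⟩
  rw [← hc, map_finsuppSum, Finsupp.sum]
  apply Finset.sum_eq_zero
  intro w hw
  have hw0 : c w ≠ 0 := Finsupp.mem_support_iff.mp hw
  have hw1 : w ≠ [] := by rintro rfl; exact hw0 h0
  have hw2 : 1 ≤ w.length := by
    cases w with
    | nil => exact absurd rfl hw1
    | cons a w => simp
  rw [map_smul, M.redIter_words _ w hw2 (Finset.le_sup hw), smul_zero]

end Aux2

end QShModel
end QShPaper

open QShPaper in
/-- For an associative algebra `A`, the quasi-shuffle product `⧢` and the
deconcatenation coproduct make `QSh(A) = ⊕_{n≥0} A^{⊗n}` a conilpotent unital bialgebra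
(hence a Hopf algebra): `⧢` is associative with unit the empty word, `Δ` is coassociative
with counit `η`, `Δ` and `η` are algebra morphisms for `⧢`, and the reduced coproduct is
locally conilpotent; moreover `⧢` is commutative whenever `A` is. -/
theorem stmt7_qsh_is_conilpotent_bialgebra
    (k : Type*) [Field k] [CharZero k]
    (A : Type*) [NonUnitalRing A] [Module k A] [SMulCommClass k A A] [IsScalarTower k A A]
    (Q : Type*) [AddCommGroup Q] [Module k Q]
    (M : QShModel k A Q) :
    -- `⧢` is associative, with unit the empty word
    (∀ u v w : Q, M.mul (M.mul u v) w = M.mul u (M.mul v w)) ∧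
    (∀ u : Q, M.mul M.emp u = u ∧ M.mul u M.emp = u) ∧
    -- the deconcatenation coproduct is coassociative, with counit `η`
    (TensorProduct.assoc k Q Q Q ∘ₗ M.comul.rTensor Q ∘ₗ M.comul =
      M.comul.lTensor Q ∘ₗ M.comul) ∧
    (M.counit.rTensor Q ∘ₗ M.comul = TensorProduct.mk k k Q 1) ∧
    (M.counit.lTensor Q ∘ₗ M.comul = (TensorProduct.mk k Q k).flip 1) ∧
    -- the coproduct is a morphism of algebras for `⧢`
    (∀ u v : Q, M.comul (M.mul u v) =
      ((TensorProduct.homTensorHomMap (RingHom.id k) Q Q Q Q ∘ₗ TensorProduct.map M.mul M.mul)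
        (M.comul u)) (M.comul v)) ∧
    (M.comul M.emp = M.emp ⊗ₜ[k] M.emp) ∧
    -- the counit is a morphism of algebras
    (∀ u v : Q, M.counit (M.mul u v) = M.counit u * M.counit v) ∧
    (M.counit M.emp = 1) ∧
    -- `QSh(A)` is conilpotent
    (IsConilpotent k M.emp M.comul M.counit) ∧
    -- if `A` is commutative then so is `⧢`
    ((∀ a b : A, a * b = b * a) → ∀ u v : Q, M.mul u v = M.mul v u) := by
  refine ⟨?_, fun u => ⟨M.mul_emp_left u, M.mul_emp_right u⟩, M.coassoc,
    M.counit_rTensor_comul, M.counit_lTensor_comul, ?_, M.comul_emp, ?_, M.counit_emp,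
    M.conilpotent, ?_⟩
  · -- associativity
    have h : (M.mul.compr₂ M.mul)
        = ((LinearMap.llcomp k Q Q Q) ∘ₗ M.mul).compl₂ M.mul := by
      apply M.ext_words₂
      intro u v
      apply M.ext_words
      intro w
      simp only [LinearMap.compr₂_apply, LinearMap.compl₂_apply, LinearMap.comp_apply,
        LinearMap.llcomp_apply]
      exact M.mul_assoc_words (u.length + v.length + w.length) u v w le_rfl
    intro u v w
    have h3 := LinearMap.congr_fun (LinearMap.congr_fun (LinearMap.congr_fun h u) v) w
    simpa only [LinearMap.compr₂_apply, LinearMap.compl₂_apply, LinearMap.comp_apply,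
      LinearMap.llcomp_apply] using h3
  · -- the coproduct is multiplicative
    have h : (M.mul.compr₂ M.comul) = ((M.mul2 ∘ₗ M.comul).compl₂ M.comul) := by
      apply M.ext_words₂
      intro u v
      simpa only [LinearMap.compr₂_apply, LinearMap.compl₂_apply, LinearMap.comp_apply]
        using M.comul_mul_words (u.length + v.length) u v le_rfl
    intro u v
    have h2 := LinearMap.congr_fun (LinearMap.congr_fun h u) v
    simpa only [LinearMap.compr₂_apply, LinearMap.compl₂_apply, LinearMap.comp_apply,
      QShModel.mul2] using h2
  · -- the counit is multiplicative
    have h : (M.mul.compr₂ M.counit)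
        = ((LinearMap.mul k k ∘ₗ M.counit).compl₂ M.counit) := by
      apply M.ext_words₂
      intro u v
      simpa only [LinearMap.compr₂_apply, LinearMap.compl₂_apply, LinearMap.comp_apply,
        LinearMap.mul_apply'] using M.counit_mul_words u v
    intro u v
    have h2 := LinearMap.congr_fun (LinearMap.congr_fun h u) v
    simpa only [LinearMap.compr₂_apply, LinearMap.compl₂_apply, LinearMap.comp_apply,
      LinearMap.mul_apply'] using h2
  · -- commutativity
    intro hA
    have h : M.mul = M.mul.flip := by
      apply M.ext_words₂
      intro u v
      simpa only [LinearMap.flip_apply]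
        using M.mul_comm_words hA (u.length + v.length) u v le_rfl
    intro u v
    have h2 := LinearMap.congr_fun (LinearMap.congr_fun h u) v
    simpa only [LinearMap.flip_apply] using h2
end
end

section
/- Let H be a conilpotent bialgebra over a field k of characteristic 0 and (A, p₊) an idempotent Rota–Baxter algebra of weight −1. For φ ∈ U(H, A), define φ₋ := j₋ ⊙ φ and φ₊ := j₊ ⊙ φ, where (j₊, j₋) is the Birkhoff decomposition of the universal element j, given by j₊(a_1…a_r) = (−1)^{r−1} p₊(p₋(…(p₋(a_1)·a_2)…·a_{r−1})·a_r) and j₋(a_1…a_r) = (−1)^{r} p₋(p₋(…(p₋(a_1)·a_2)…·a_{r−1})·a_r). Then φ₋ * φ = φ₊, with φ₊ ∈ U(H, A₊) and φ₋ ∈ U(H, A₋); that is, (φ₊, φ₋) is the (unique) Birkhoff decomposition of φ. -/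
open scoped TensorProduct
open TensorProduct

noncomputable section

namespace QShPaper

/-- The distinguished element `j ∈ U(QSh(A), A)`: `j(1) = 1_A`, `j(a) = a` on letters, and
`j` vanishes on words of length `≥ 2`. -/
def QShModel.IsJ {k : Type*} [Field k] {A Q : Type*} [Ring A] [Algebra k A]
    [AddCommGroup Q] [Module k Q] (M : QShModel k A Q) (j : Q →ₗ[k] A) : Prop :=
  j M.emp = 1 ∧ (∀ a : A, j (M.cons a M.emp) = a) ∧
    ∀ (a b : A) (u : Q), j (M.cons a (M.cons b u)) = 0

end QShPaper

namespace QShPaper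

/-- The iterated Rota–Baxter expression `p₋(…(p₋(p₋(a_1)·a_2)·a_3)…·a_{r−1})·a_r`
(without the outermost `p₊`/`p₋`). -/
def rbChain' {k : Type*} [Field k] {A : Type*} [Ring A] [Algebra k A]
    (pm : A →ₗ[k] A) (a : A) (l : List A) : A :=
  l.foldl (fun x b => pm x * b) a

end QShPaper

namespace QShPaper

section Maps
variable {k : Type*} [Field k]
variable {M N P M' N' : Type*} [AddCommGroup M] [Module k M] [AddCommGroup N] [Module k N]
  [AddCommGroup P] [Module k P] [AddCommGroup M'] [Module k M'] [AddCommGroup N'] [Module k N']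

lemma mapSubLeft (f f' : M →ₗ[k] M') (g : N →ₗ[k] N') :
    TensorProduct.map (f - f') g = TensorProduct.map f g - TensorProduct.map f' g :=
  TensorProduct.ext' fun x y => by simp [sub_tmul]

lemma mapSubRight (f : M →ₗ[k] M') (g g' : N →ₗ[k] N') :
    TensorProduct.map f (g - g') = TensorProduct.map f g - TensorProduct.map f g' :=
  TensorProduct.ext' fun x y => by simp [tmul_sub]

lemma mapSumLeft {ι : Type*} (s : Finset ι) (f : ι → (M →ₗ[k] M')) (g : N →ₗ[k] N') :
    TensorProduct.map (∑ i ∈ s, f i) g = ∑ i ∈ s, TensorProduct.map (f i) g :=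
  TensorProduct.ext' fun x y => by
    simp [sum_tmul, LinearMap.sum_apply]

lemma mapSumRight {ι : Type*} (s : Finset ι) (f : M →ₗ[k] M') (g : ι → (N →ₗ[k] N')) :
    TensorProduct.map f (∑ i ∈ s, g i) = ∑ i ∈ s, TensorProduct.map f (g i) :=
  TensorProduct.ext' fun x y => by
    simp [tmul_sum, LinearMap.sum_apply]

end Maps

section Gen
variable {k : Type*} [Field k] {H : Type*} [Ring H] [Bialgebra k H]
variable {A : Type*} [Ring A] [Algebra k A]

local notation "Δ" => (Coalgebra.comul (R := k) (A := H))
local notation "ε" => (Coalgebra.counit (R := k) (A := H))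

lemma counit_ker_sub (x : H) : ε (x - ε x • 1) = 0 := by
  simp [map_sub, Bialgebra.counit_one]

lemma ext_from_one_ker (f g : H →ₗ[k] A) (h1 : f 1 = g 1)
    (hk : ∀ x, ε x = 0 → f x = g x) : f = g := by
  ext x
  have hx : x = ε x • (1 : H) + (x - ε x • 1) := by abel
  rw [hx, map_add, map_add, map_smul, map_smul, h1, hk _ (counit_ker_sub x)]

lemma conv_apply (f g : H →ₗ[k] A) (x : H) :
    conv k A Δ f g x = LinearMap.mul' k A (TensorProduct.map f g (Δ x)) := rfl

lemma conv_unit_left (f : H →ₗ[k] A) : conv k A Δ (convUnit k A ε) f = f := by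
  ext x
  have h2 : TensorProduct.map ε f (Δ x) = (1:k) ⊗ₜ[k] f x := by
    have hm : TensorProduct.map ε f
        = LinearMap.lTensor k f ∘ₗ LinearMap.rTensor H ε := by
      rw [LinearMap.lTensor, LinearMap.rTensor, ← TensorProduct.map_comp]; simp
    rw [hm, LinearMap.comp_apply, Coalgebra.rTensor_counit_comul (R := k) x]
    simp
  have h1 : conv k A Δ (convUnit k A ε) f x
      = (TensorProduct.lid k A) ((TensorProduct.map ε f) (Δ x)) := by
    rw [conv_apply]
    have : ∀ t : H ⊗[k] H, LinearMap.mul' k A (TensorProduct.map (convUnit k A ε) f t)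
        = (TensorProduct.lid k A) ((TensorProduct.map ε f) t) := by
      intro t
      have : (LinearMap.mul' k A) ∘ₗ TensorProduct.map (convUnit k A ε) f
          = (TensorProduct.lid k A).toLinearMap ∘ₗ TensorProduct.map ε f :=
        TensorProduct.ext' fun x y => by
          simp [convUnit, Algebra.smul_def, Algebra.commutes]
      exact LinearMap.congr_fun this t
    exact this _
  rw [h1, h2]; simp

lemma conv_unit_right (f : H →ₗ[k] A) : conv k A Δ f (convUnit k A ε) = f := by
  ext x
  have h2 : TensorProduct.map f ε (Δ x) = f x ⊗ₜ[k] (1:k) := by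
    have hm : TensorProduct.map f ε
        = LinearMap.rTensor k f ∘ₗ LinearMap.lTensor H ε := by
      rw [LinearMap.lTensor, LinearMap.rTensor, ← TensorProduct.map_comp]; simp
    rw [hm, LinearMap.comp_apply, Coalgebra.lTensor_counit_comul (R := k) x]
    simp
  have h1 : conv k A Δ f (convUnit k A ε) x
      = (TensorProduct.rid k A) ((TensorProduct.map f ε) (Δ x)) := by
    rw [conv_apply]
    have : ∀ t : H ⊗[k] H, LinearMap.mul' k A (TensorProduct.map f (convUnit k A ε) t)
        = (TensorProduct.rid k A) ((TensorProduct.map f ε) t) := by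
      intro t
      have : (LinearMap.mul' k A) ∘ₗ TensorProduct.map f (convUnit k A ε)
          = (TensorProduct.rid k A).toLinearMap ∘ₗ TensorProduct.map f ε :=
        TensorProduct.ext' fun x y => by
          simp [convUnit, Algebra.smul_def, Algebra.commutes]
      exact LinearMap.congr_fun this t
    exact this _
  rw [h1, h2]; simp

lemma conv_assoc (f g h : H →ₗ[k] A) :
    conv k A Δ (conv k A Δ f g) h = conv k A Δ f (conv k A Δ g h) := by
  have key : (LinearMap.mul' k A) ∘ₗ (TensorProduct.map (LinearMap.mul' k A) h) ∘ₗ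
        (LinearMap.rTensor H (TensorProduct.map f g)) ∘ₗ
        (TensorProduct.assoc k H H H).symm.toLinearMap
      = (LinearMap.mul' k A) ∘ₗ (TensorProduct.map f (LinearMap.mul' k A)) ∘ₗ
        (LinearMap.lTensor H (TensorProduct.map g h)) := by
    apply TensorProduct.ext'
    intro x t
    induction t using TensorProduct.induction_on with
    | zero => rw [tmul_zero]; simp only [map_zero]
    | tmul y z => simp [mul_assoc]
    | add u v hu hv =>
        simp only [tmul_add, map_add] at hu hv ⊢
        rw [hu, hv]
  ext x
  have e1 : conv k A Δ (conv k A Δ f g) h x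
      = LinearMap.mul' k A ((TensorProduct.map (LinearMap.mul' k A) h)
          ((LinearMap.rTensor H (TensorProduct.map f g))
            ((LinearMap.rTensor H Δ) (Δ x)))) := by
    rw [conv_apply]
    congr 1
    have : TensorProduct.map (conv k A Δ f g) h
        = TensorProduct.map (LinearMap.mul' k A) h ∘ₗ
          LinearMap.rTensor H (TensorProduct.map f g) ∘ₗ LinearMap.rTensor H Δ := by
      unfold conv
      rw [LinearMap.rTensor, LinearMap.rTensor, ← TensorProduct.map_comp, ← TensorProduct.map_comp]
      simp
    rw [this]; rfl
  have e2 : conv k A Δ f (conv k A Δ g h) x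
      = LinearMap.mul' k A ((TensorProduct.map f (LinearMap.mul' k A))
          ((LinearMap.lTensor H (TensorProduct.map g h))
            ((LinearMap.lTensor H Δ) (Δ x)))) := by
    rw [conv_apply]
    congr 1
    have : TensorProduct.map f (conv k A Δ g h)
        = TensorProduct.map f (LinearMap.mul' k A) ∘ₗ
          LinearMap.lTensor H (TensorProduct.map g h) ∘ₗ LinearMap.lTensor H Δ := by
      unfold conv
      rw [LinearMap.lTensor, LinearMap.lTensor, ← TensorProduct.map_comp, ← TensorProduct.map_comp]
      simp
    rw [this]; rfl
  have hco : (LinearMap.rTensor H Δ) (Δ x)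
      = (TensorProduct.assoc k H H H).symm ((LinearMap.lTensor H Δ) (Δ x)) := by
    rw [LinearEquiv.eq_symm_apply]
    exact Coalgebra.coassoc_apply (R := k) x
  rw [e1, e2, hco]
  exact LinearMap.congr_fun key ((LinearMap.lTensor H Δ) (Δ x))

lemma conv_sub_left (f f' g : H →ₗ[k] A) :
    conv k A Δ (f - f') g = conv k A Δ f g - conv k A Δ f' g := by
  unfold conv; rw [mapSubLeft]; ext x; simp

lemma conv_sub_right (f g g' : H →ₗ[k] A) :
    conv k A Δ f (g - g') = conv k A Δ f g - conv k A Δ f g' := by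
  unfold conv; rw [mapSubRight]; ext x; simp

lemma conv_sum_left {ι : Type*} (s : Finset ι) (f : ι → (H →ₗ[k] A)) (g : H →ₗ[k] A) :
    conv k A Δ (∑ i ∈ s, f i) g = ∑ i ∈ s, conv k A Δ (f i) g := by
  unfold conv; rw [mapSumLeft]; ext x; simp

lemma conv_sum_right {ι : Type*} (s : Finset ι) (f : H →ₗ[k] A) (g : ι → (H →ₗ[k] A)) :
    conv k A Δ f (∑ i ∈ s, g i) = ∑ i ∈ s, conv k A Δ f (g i) := by
  unfold conv; rw [mapSumRight]; ext x; simp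

end Gen
end QShPaper

namespace QShPaper

section Flatness
variable {k : Type*} [Field k]
variable {V W W' X : Type*} [AddCommGroup V] [Module k V] [AddCommGroup W] [Module k W]
  [AddCommGroup W'] [Module k W'] [AddCommGroup X] [Module k X]

lemma lTensor_map_mem_span (f : W' →ₗ[k] W) (Pr : W → Prop) (hPr : ∀ w', Pr (f w'))
    (u : V ⊗[k] W') :
    LinearMap.lTensor V f u ∈
      Submodule.span k {x : V ⊗[k] W | ∃ v w, Pr w ∧ x = v ⊗ₜ[k] w} := by
  induction u using TensorProduct.induction_on with
  | zero => simp
  | tmul v w => exact Submodule.subset_span ⟨v, f w, hPr w, by simp⟩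
  | add a b ha hb => rw [map_add]; exact Submodule.add_mem _ ha hb

lemma span_eq_range_lTensor (P : Submodule k W) :
    Submodule.span k {x : V ⊗[k] W | ∃ v w, w ∈ P ∧ x = v ⊗ₜ[k] w}
      = LinearMap.range (LinearMap.lTensor V P.subtype) := by
  apply le_antisymm
  · rw [Submodule.span_le]
    rintro x ⟨v, w, hw, rfl⟩
    exact ⟨v ⊗ₜ[k] ⟨w, hw⟩, by simp⟩
  · rintro x ⟨u, rfl⟩
    exact lTensor_map_mem_span P.subtype (fun w => w ∈ P) (fun w' => w'.2) u

/-- Over a field: if `t` lies in `V ⊗ P` and `(id ⊗ g) t = 0` then `t` lies in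
`V ⊗ (P ∩ ker g)`. -/
lemma decomp_of_lTensor_eq_zero (P : Submodule k W) (g : W →ₗ[k] X) (t : V ⊗[k] W)
    (ht : t ∈ Submodule.span k {x : V ⊗[k] W | ∃ v w, w ∈ P ∧ x = v ⊗ₜ[k] w})
    (h0 : LinearMap.lTensor V g t = 0) :
    t ∈ Submodule.span k {x : V ⊗[k] W | ∃ v w, (w ∈ P ∧ g w = 0) ∧ x = v ⊗ₜ[k] w} := by
  rw [span_eq_range_lTensor] at ht
  obtain ⟨s, rfl⟩ := ht
  set g' : P →ₗ[k] X := g ∘ₗ P.subtype with hg'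
  have hs0 : LinearMap.lTensor V g' s = 0 := by
    rw [hg', LinearMap.lTensor_comp, LinearMap.comp_apply, h0]
  have hexact : Function.Exact (LinearMap.lTensor V (LinearMap.ker g').subtype)
      (LinearMap.lTensor V g') :=
    Module.Flat.lTensor_exact V (LinearMap.exact_subtype_ker_map g')
  obtain ⟨u, hu⟩ := (hexact s).mp hs0
  rw [← hu, ← LinearMap.comp_apply, ← LinearMap.lTensor_comp]
  exact lTensor_map_mem_span _ _ (fun w' => ⟨w'.1.2, w'.2⟩) u

end Flatness

section Gen2
variable {k : Type*} [Field k] {H : Type*} [Ring H] [Bialgebra k H]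
variable {A : Type*} [Ring A] [Algebra k A]

local notation "Δ" => (Coalgebra.comul (R := k) (A := H))
local notation "ε" => (Coalgebra.counit (R := k) (A := H))

lemma redComul_apply (x : H) :
    redComul k (1:H) Δ x = Δ x - 1 ⊗ₜ[k] x - x ⊗ₜ[k] (1:H) := by
  simp [redComul]

lemma redComul_one : redComul k (1:H) Δ (1:H) = - ((1:H) ⊗ₜ[k] (1:H)) := by
  rw [redComul_apply, Bialgebra.comul_one, Algebra.TensorProduct.one_def]
  abel

/-- `Δ'(H⁺) ⊆ H⁺ ⊗ H⁺`. -/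
lemma redComul_mem_KK (x : H) (hx : ε x = 0) :
    redComul k (1:H) Δ x ∈
      Submodule.span k {t : H ⊗[k] H | ∃ a b, (ε a = 0 ∧ ε b = 0) ∧ t = a ⊗ₜ[k] b} := by
  set σ : H →ₗ[k] H := (LinearMap.toSpanSingleton k H 1) ∘ₗ ε with hσ
  set π : H →ₗ[k] H := LinearMap.id - σ with hπ
  have hσap : ∀ y : H, σ y = ε y • (1:H) := fun y => rfl
  have hπker : ∀ y : H, ε (π y) = 0 := by
    intro y
    simp [hπ, hσap, Bialgebra.counit_one]
  have key : TensorProduct.map π π (Δ x) = redComul k (1:H) Δ x := by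
    have hexp : TensorProduct.map π π
        = TensorProduct.map LinearMap.id LinearMap.id
          - TensorProduct.map σ LinearMap.id - TensorProduct.map LinearMap.id σ
          + TensorProduct.map σ σ := by
      rw [hπ, mapSubLeft, mapSubRight, mapSubRight]
      abel
    have h1 : TensorProduct.map σ LinearMap.id (Δ x) = (1:H) ⊗ₜ[k] x := by
      have : TensorProduct.map σ LinearMap.id
          = TensorProduct.map (LinearMap.toSpanSingleton k H 1) LinearMap.id ∘ₗ
            LinearMap.rTensor H ε := by
        rw [hσ, LinearMap.rTensor, ← TensorProduct.map_comp]; simp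
      rw [this, LinearMap.comp_apply, Coalgebra.rTensor_counit_comul (R := k) x]
      simp
    have h2 : TensorProduct.map LinearMap.id σ (Δ x) = x ⊗ₜ[k] (1:H) := by
      have : TensorProduct.map LinearMap.id σ
          = TensorProduct.map LinearMap.id (LinearMap.toSpanSingleton k H 1) ∘ₗ
            LinearMap.lTensor H ε := by
        rw [hσ, LinearMap.lTensor, ← TensorProduct.map_comp]; simp
      rw [this, LinearMap.comp_apply, Coalgebra.lTensor_counit_comul (R := k) x]
      simp
    have h3 : TensorProduct.map σ σ (Δ x) = 0 := by
      have hcomp : TensorProduct.map σ σ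
          = TensorProduct.map σ LinearMap.id ∘ₗ TensorProduct.map LinearMap.id σ := by
        rw [← TensorProduct.map_comp]; simp
      rw [hcomp, LinearMap.comp_apply, h2]
      simp [hσap, hx]
    rw [hexp]
    simp only [LinearMap.add_apply, LinearMap.sub_apply, h1, h2, h3,
      TensorProduct.map_id, LinearMap.id_apply]
    rw [redComul_apply]
    abel
  rw [← key]
  have : ∀ t : H ⊗[k] H, TensorProduct.map π π t ∈
      Submodule.span k {t : H ⊗[k] H | ∃ a b, (ε a = 0 ∧ ε b = 0) ∧ t = a ⊗ₜ[k] b} := by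
    intro t
    induction t using TensorProduct.induction_on with
    | zero => simp
    | tmul a b => exact Submodule.subset_span ⟨π a, π b, ⟨hπker a, hπker b⟩, by simp⟩
    | add a b ha hb => rw [map_add]; exact Submodule.add_mem _ ha hb
  exact this _

set_option synthInstance.maxHeartbeats 1000000 in
set_option maxHeartbeats 1000000 in
/-- The reduced coproduct is coassociative. -/
lemma redComul_coassoc :
    (TensorProduct.assoc k H H H).toLinearMap ∘ₗ
        LinearMap.rTensor H (redComul k (1:H) Δ) ∘ₗ redComul k (1:H) Δ
      = LinearMap.lTensor H (redComul k (1:H) Δ) ∘ₗ redComul k (1:H) Δ := by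
  set L : H →ₗ[k] H ⊗[k] H := (TensorProduct.mk k H H) 1 with hL
  set R : H →ₗ[k] H ⊗[k] H := (TensorProduct.mk k H H).flip 1 with hR
  have hΔ' : redComul k (1:H) Δ = Δ - L - R := rfl
  ext x
  simp only [LinearMap.comp_apply, LinearEquiv.coe_coe]
  set d := Δ x with hd
  have hΔ'x : redComul k (1:H) Δ x = d - 1 ⊗ₜ[k] x - x ⊗ₜ[k] (1:H) := redComul_apply x
  have hL1 : ∀ y : H, L y = 1 ⊗ₜ[k] y := fun y => rfl
  have hR1 : ∀ y : H, R y = y ⊗ₜ[k] (1:H) := fun y => rfl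
  -- expand rTensor / lTensor of the difference
  have hrT : LinearMap.rTensor H (redComul k (1:H) Δ)
      = LinearMap.rTensor H Δ - LinearMap.rTensor H L - LinearMap.rTensor H R := by
    rw [hΔ', LinearMap.rTensor_sub, LinearMap.rTensor_sub]
  have hlT : LinearMap.lTensor H (redComul k (1:H) Δ)
      = LinearMap.lTensor H Δ - LinearMap.lTensor H L - LinearMap.lTensor H R := by
    rw [hΔ', LinearMap.lTensor_sub, LinearMap.lTensor_sub]
  -- auxiliary map identities
  have aL : ∀ t : H ⊗[k] H, (TensorProduct.assoc k H H H) (LinearMap.rTensor H L t)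
      = 1 ⊗ₜ[k] t := by
    intro t
    have : (TensorProduct.assoc k H H H).toLinearMap ∘ₗ LinearMap.rTensor H L
        = (TensorProduct.mk k H (H ⊗[k] H)) 1 :=
      TensorProduct.ext' fun a b => by simp [hL1]
    exact LinearMap.congr_fun this t
  have aR : ∀ t : H ⊗[k] H, (TensorProduct.assoc k H H H) (LinearMap.rTensor H R t)
      = LinearMap.lTensor H L t := by
    intro t
    have : (TensorProduct.assoc k H H H).toLinearMap ∘ₗ LinearMap.rTensor H R
        = LinearMap.lTensor H L :=
      TensorProduct.ext' fun a b => by simp [hL1, hR1]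
    exact LinearMap.congr_fun this t
  have aR2 : ∀ t : H ⊗[k] H, (TensorProduct.assoc k H H H) (t ⊗ₜ[k] (1:H))
      = LinearMap.lTensor H R t := by
    intro t
    have : (TensorProduct.assoc k H H H).toLinearMap ∘ₗ (TensorProduct.mk k (H ⊗[k] H) H).flip 1
        = LinearMap.lTensor H R :=
      TensorProduct.ext' fun a b => by simp [hR1]
    have := LinearMap.congr_fun this t
    simpa using this
  have coas : (TensorProduct.assoc k H H H) (LinearMap.rTensor H Δ d)
      = LinearMap.lTensor H Δ d := Coalgebra.coassoc_apply (R := k) x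
  rw [hrT, hlT]
  simp only [LinearMap.sub_apply, map_sub, hΔ'x]
  simp only [map_sub, LinearMap.rTensor_tmul, LinearMap.lTensor_tmul,
    Bialgebra.comul_one, Algebra.TensorProduct.one_def, hL1, hR1, coas, aL, aR, aR2]
  simp only [assoc_tmul, tmul_sub, sub_tmul, map_sub, LinearMap.lTensor_tmul, hL1, hR1, aR2]
  abel

end Gen2
end QShPaper

namespace QShPaper

section StabLimit
variable {k : Type*} [Field k] {H : Type*} [AddCommGroup H] [Module k H]
variable {A : Type*} [Ring A] [Algebra k A]

/-- The "limit" of an eventually-pointwise-stable sequence of linear maps. -/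
noncomputable def stabLimit (T : ℕ → H →ₗ[k] A)
    (hT : ∀ x, ∃ N, ∀ n, N ≤ n → T n x = T N x) : H →ₗ[k] A where
  toFun x := T (Classical.choose (hT x)) x
  map_add' x y := by
    show T (Classical.choose (hT (x + y))) (x + y)
      = T (Classical.choose (hT x)) x + T (Classical.choose (hT y)) y
    have hx := Classical.choose_spec (hT x)
    have hy := Classical.choose_spec (hT y)
    have hxy := Classical.choose_spec (hT (x + y))
    set Nx := Classical.choose (hT x)
    set Ny := Classical.choose (hT y)
    set Nxy := Classical.choose (hT (x + y))
    set N := max Nxy (max Nx Ny) with hN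
    have e0 : T Nxy (x + y) = T N (x + y) := (hxy N (le_max_left _ _)).symm
    have e1 : T N x = T Nx x := hx N (le_trans (le_max_left _ _) (le_max_right _ _))
    have e2 : T N y = T Ny y := hy N (le_trans (le_max_right _ _) (le_max_right _ _))
    rw [e0, map_add, e1, e2]
  map_smul' c x := by
    show T (Classical.choose (hT (c • x))) (c • x) = c • T (Classical.choose (hT x)) x
    have hx := Classical.choose_spec (hT x)
    have hcx := Classical.choose_spec (hT (c • x))
    set Nx := Classical.choose (hT x)
    set Ncx := Classical.choose (hT (c • x))
    set N := max Ncx Nx with hN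
    have e0 : T Ncx (c • x) = T N (c • x) := (hcx N (le_max_left _ _)).symm
    have e1 : T N x = T Nx x := hx N (le_max_right _ _)
    rw [e0, map_smul, e1]

lemma stabLimit_eq_ge (T : ℕ → H →ₗ[k] A) (hT : ∀ x, ∃ N, ∀ n, N ≤ n → T n x = T N x)
    (x : H) (n : ℕ) (hn : Classical.choose (hT x) ≤ n) :
    stabLimit T hT x = T n x := by
  have hx := Classical.choose_spec (hT x)
  exact (hx n hn).symm

lemma stabLimit_eq_of (T : ℕ → H →ₗ[k] A) (hT : ∀ x, ∃ N, ∀ n, N ≤ n → T n x = T N x)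
    (x : H) (N : ℕ) (hN : ∀ n, N ≤ n → T n x = T N x) :
    stabLimit T hT x = T N x := by
  set N0 := Classical.choose (hT x)
  rw [stabLimit_eq_ge T hT x (max N0 N) (le_max_left _ _)]
  exact hN _ (le_max_right _ _)

end StabLimit

section Inv
variable {k : Type*} [Field k] {H : Type*} [Ring H] [Bialgebra k H]
variable {A : Type*} [Ring A] [Algebra k A]

local notation "Δ" => (Coalgebra.comul (R := k) (A := H))
local notation "ε" => (Coalgebra.counit (R := k) (A := H))

lemma convUnit_one : convUnit k A ε (1 : H) = 1 := by
  simp [convUnit, Bialgebra.counit_one]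

lemma convUnit_ker (x : H) (hx : ε x = 0) : convUnit k A ε x = 0 := by
  simp [convUnit, hx]

lemma conv_eval_one (f g : H →ₗ[k] A) :
    conv k A Δ f g (1 : H) = f 1 * g 1 := by
  rw [conv_apply, Bialgebra.comul_one, Algebra.TensorProduct.one_def]
  simp

lemma conv_eval_ker (f g : H →ₗ[k] A) (x : H) (hx : ε x = 0) :
    conv k A Δ f g x = f 1 * g x + f x * g 1 +
      LinearMap.mul' k A (TensorProduct.map f g (redComul k (1:H) Δ x)) := by
  rw [conv_apply]
  have h : Δ x = 1 ⊗ₜ[k] x + x ⊗ₜ[k] (1:H) + redComul k (1:H) Δ x := by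
    rw [redComul_apply]; abel
  rw [h]
  simp

lemma convPow_succ_one_eq_zero (f : H →ₗ[k] A) (hf : f 1 = 0) (n : ℕ) :
    convPow k A Δ ε f (n + 1) 1 = 0 := by
  show conv k A Δ f (convPow k A Δ ε f n) 1 = 0
  rw [conv_eval_one, hf, zero_mul]

/-- Decomposition of the reduced coproduct of an element killed by `Δ'^{[n+2]}`. -/
lemma redIter_succ_decomp (n : ℕ) (x : H) (hx : ε x = 0)
    (h : redIter k (1:H) Δ (n+1) x = 0) :
    redComul k (1:H) Δ x ∈ Submodule.span k
      {t : H ⊗[k] H | ∃ a b, (ε b = 0 ∧ redIter k (1:H) Δ n b = 0) ∧ t = a ⊗ₜ[k] b} := by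
  have h0 : LinearMap.lTensor H (redIter k (1:H) Δ n) (redComul k (1:H) Δ x) = 0 := by
    have h1 : TensorProduct.map (toPow1 k).toLinearMap (redIter k (1:H) Δ n)
        (redComul k (1:H) Δ x) = 0 := by
      have h2 := h
      rw [show redIter k (1:H) Δ (n+1)
          = (TensorPower.cast k H (show 1 + (n+1) = n+1+1 by omega)).toLinearMap ∘ₗ
            (TensorPower.mulEquiv (R := k) (M := H) (n := 1) (m := n+1)).toLinearMap ∘ₗ
              TensorProduct.map (toPow1 k).toLinearMap (redIter k (1:H) Δ n) ∘ₗ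
                redComul k (1:H) Δ from rfl] at h2
      simp only [LinearMap.comp_apply, LinearEquiv.coe_coe] at h2
      exact (LinearEquiv.map_eq_zero_iff _).mp ((LinearEquiv.map_eq_zero_iff _).mp h2)
    have h3 : TensorProduct.map (toPow1 k).toLinearMap (redIter k (1:H) Δ n)
        = (TensorProduct.congr (toPow1 k) (LinearEquiv.refl k _)).toLinearMap ∘ₗ
          LinearMap.lTensor H (redIter k (1:H) Δ n) :=
      TensorProduct.ext' fun a b => by
        simp [TensorProduct.congr_tmul]
    rw [h3, LinearMap.comp_apply] at h1
    exact (LinearEquiv.map_eq_zero_iff _).mp h1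
  have hKK := redComul_mem_KK x hx
  have hKK' : redComul k (1:H) Δ x ∈ Submodule.span k
      {t : H ⊗[k] H | ∃ v w, w ∈ LinearMap.ker ε ∧ t = v ⊗ₜ[k] w} := by
    refine Submodule.span_mono ?_ hKK
    rintro t ⟨a, b, ⟨_, hb⟩, rfl⟩
    exact ⟨a, b, LinearMap.mem_ker.mpr hb, rfl⟩
  have := decomp_of_lTensor_eq_zero (LinearMap.ker ε) (redIter k (1:H) Δ n)
    (redComul k (1:H) Δ x) hKK' h0
  refine Submodule.span_mono ?_ this
  rintro t ⟨v, w, ⟨hw1, hw2⟩, rfl⟩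
  exact ⟨v, w, ⟨LinearMap.mem_ker.mp hw1, hw2⟩, rfl⟩

lemma convPow_vanish (f : H →ₗ[k] A) (hf : f 1 = 0) :
    ∀ n m, n + 1 ≤ m → ∀ x, ε x = 0 → redIter k (1:H) Δ n x = 0 →
      convPow k A Δ ε f m x = 0 := by
  intro n
  induction n with
  | zero =>
      intro m _ x _ hx0
      have : x = 0 := by
        have : (toPow1 (Q := H) k).toLinearMap x = 0 := hx0
        simpa using this
      rw [this, map_zero]
  | succ n ih =>
      intro m hm x hx hx0
      obtain ⟨m', rfl⟩ : ∃ m', m = m' + 1 := ⟨m - 1, by omega⟩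
      have hm' : n + 1 ≤ m' := by omega
      show conv k A Δ f (convPow k A Δ ε f m') x = 0
      rw [conv_eval_ker _ _ x hx, hf, zero_mul]
      have h1 : convPow k A Δ ε f m' 1 = 0 := by
        obtain ⟨i, rfl⟩ : ∃ i, m' = i + 1 := ⟨m' - 1, by omega⟩
        exact convPow_succ_one_eq_zero f hf i
      rw [h1, mul_zero, zero_add, zero_add]
      have hdec := redIter_succ_decomp n x hx hx0
      have hkill : ∀ t ∈ Submodule.span k
          {t : H ⊗[k] H | ∃ a b, (ε b = 0 ∧ redIter k (1:H) Δ n b = 0) ∧ t = a ⊗ₜ[k] b},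
          LinearMap.mul' k A (TensorProduct.map f (convPow k A Δ ε f m') t) = 0 := by
        intro t ht
        induction ht using Submodule.span_induction with
        | mem t ht =>
            obtain ⟨a, b, ⟨hb1, hb2⟩, rfl⟩ := ht
            simp [ih m' hm' b hb1 hb2]
        | zero => simp
        | add u v _ _ hu hv => simp only [map_add, hu, hv, add_zero]
        | smul c u _ hu => simp only [map_smul, hu, smul_zero]
      exact hkill _ hdec

end Inv
end QShPaper

namespace QShPaper
section Inv2
variable {k : Type*} [Field k] {H : Type*} [Ring H] [Bialgebra k H]
variable {A : Type*} [Ring A] [Algebra k A]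

local notation "Δ" => (Coalgebra.comul (R := k) (A := H))
local notation "ε" => (Coalgebra.counit (R := k) (A := H))

lemma convPow_comm (f : H →ₗ[k] A) (n : ℕ) :
    conv k A Δ (convPow k A Δ ε f n) f = convPow k A Δ ε f (n+1) := by
  induction n with
  | zero =>
      show conv k A Δ (convUnit k A ε) f = conv k A Δ f (convPow k A Δ ε f 0)
      rw [conv_unit_left]
      show f = conv k A Δ f (convUnit k A ε)
      rw [conv_unit_right]
  | succ n ih =>
      show conv k A Δ (conv k A Δ f (convPow k A Δ ε f n)) f = _
      rw [conv_assoc, ih]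
      rfl

set_option maxHeartbeats 1000000 in
lemma exists_conv_inverse (hco : IsConilpotent k (1:H) Δ ε) (f : H →ₗ[k] A) (hf1 : f 1 = 1) :
    ∃ fi : H →ₗ[k] A, conv k A Δ f fi = convUnit k A ε ∧ conv k A Δ fi f = convUnit k A ε ∧
      fi 1 = 1 ∧
      ∀ B : Submodule k A, (∀ a ∈ B, ∀ b ∈ B, a * b ∈ B) → (∀ x, ε x = 0 → f x ∈ B) →
        ∀ x, ε x = 0 → fi x ∈ B := by
  classical
  set g : H →ₗ[k] A := convUnit k A ε - f with hg
  have hf : f = convUnit k A ε - g := by rw [hg]; abel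
  have hg1 : g 1 = 0 := by
    simp [hg, convUnit_one (A := A), hf1]
  have hgker : ∀ x, ε x = 0 → g x = - f x := fun x hx => by
    simp [hg, convUnit_ker x hx]
  set gp : ℕ → H →ₗ[k] A := convPow k A Δ ε g with hgp
  have hgp0 : gp 0 = convUnit k A ε := rfl
  have hgps : ∀ i, gp (i+1) = conv k A Δ g (gp i) := fun i => rfl
  have hgp1 : ∀ i, 1 ≤ i → gp i 1 = 0 := by
    intro i hi
    obtain ⟨j, rfl⟩ : ∃ j, i = j + 1 := ⟨i - 1, by omega⟩
    exact convPow_succ_one_eq_zero g hg1 j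
  set S : ℕ → H →ₗ[k] A := fun n => ∑ i ∈ Finset.range n, gp i with hS
  have hSx : ∀ n x, S n x = ∑ i ∈ Finset.range n, gp i x := by
    intro n x
    rw [hS]
    exact LinearMap.sum_apply _ _ _
  have hgpx : ∀ x, ∃ N, 1 ≤ N ∧ ∀ i, N ≤ i → gp i x = 0 := by
    intro x
    obtain ⟨n₀, hn₀⟩ := hco (x - ε x • 1) (LinearMap.mem_ker.mpr (counit_ker_sub x))
    refine ⟨n₀ + 2, by omega, fun i hi => ?_⟩
    have hx' : gp i (x - ε x • 1) = 0 :=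
      convPow_vanish g hg1 n₀ i (by omega) _ (counit_ker_sub x) hn₀
    have hdec : gp i x = ε x • gp i 1 + gp i (x - ε x • 1) := by
      rw [← map_smul, ← map_add]
      congr 1
      abel
    rw [hdec, hx', hgp1 i (by omega), smul_zero, add_zero]
  have hT : ∀ x, ∃ N, ∀ n, N ≤ n → S n x = S N x := by
    intro x
    obtain ⟨N, _, hNv⟩ := hgpx x
    refine ⟨N, fun n hn => ?_⟩
    rw [hSx, hSx, ← Finset.sum_range_add_sum_Ico (fun i => gp i x) hn]
    rw [Finset.sum_eq_zero (fun i hi => hNv i (Finset.mem_Ico.mp hi).1), add_zero]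
  set fi : H →ₗ[k] A := stabLimit S hT with hfi
  have hfieq : ∀ x n, Classical.choose (hT x) ≤ n → fi x = S n x := by
    intro x n hn
    rw [hfi]
    exact stabLimit_eq_ge S hT x n hn
  have hSone : ∀ n, 1 ≤ n → S n 1 = 1 := by
    intro n hn
    rw [hSx]
    rw [Finset.sum_eq_single_of_mem 0 (Finset.mem_range.mpr (by omega))
      (fun i _ hi => hgp1 i (by omega))]
    rw [hgp0]
    exact convUnit_one
  have hfi1 : fi 1 = 1 := by
    rw [hfieq 1 (max 1 (Classical.choose (hT 1))) (le_max_right _ _),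
      hSone _ (le_max_left _ _)]
  -- membership claim
  have hmem : ∀ B : Submodule k A, (∀ a ∈ B, ∀ b ∈ B, a * b ∈ B) →
      (∀ x, ε x = 0 → f x ∈ B) → ∀ x, ε x = 0 → fi x ∈ B := by
    intro B hBmul hfB
    have hgB : ∀ x, ε x = 0 → g x ∈ B := by
      intro x hx; rw [hgker x hx]; exact B.neg_mem (hfB x hx)
    have hgpB : ∀ i x, ε x = 0 → gp (i+1) x ∈ B := by
      intro i
      induction i with
      | zero =>
          intro x hx
          rw [hgps, conv_eval_ker _ _ x hx, hg1, zero_mul, zero_add, hgp0, convUnit_one, mul_one]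
          refine B.add_mem (hgB x hx) ?_
          have := redComul_mem_KK x hx
          refine Submodule.span_induction ?_ ?_ ?_ ?_ this
          · rintro t ⟨a, b, ⟨ha, hb⟩, rfl⟩
            simp only [TensorProduct.map_tmul, LinearMap.mul'_apply]
            rw [convUnit_ker b hb, mul_zero]
            exact B.zero_mem
          · simp only [map_zero]; exact B.zero_mem
          · intro u v _ _ hu hv; rw [map_add, map_add]; exact B.add_mem hu hv
          · intro c u _ hu; rw [map_smul, map_smul]; exact B.smul_mem c hu
      | succ i ih =>
          intro x hx
          rw [hgps, conv_eval_ker _ _ x hx, hg1, zero_mul, zero_add,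
            hgp1 (i+1) (by omega), mul_zero, zero_add]
          have := redComul_mem_KK x hx
          refine Submodule.span_induction ?_ ?_ ?_ ?_ this
          · rintro t ⟨a, b, ⟨ha, hb⟩, rfl⟩
            simp only [TensorProduct.map_tmul, LinearMap.mul'_apply]
            exact hBmul _ (hgB a ha) _ (ih b hb)
          · simp only [map_zero]; exact B.zero_mem
          · intro u v _ _ hu hv; rw [map_add, map_add]; exact B.add_mem hu hv
          · intro c u _ hu; rw [map_smul, map_smul]; exact B.smul_mem c hu
    intro x hx
    rw [hfieq x _ le_rfl, hSx]
    refine Submodule.sum_mem _ ?_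
    intro i _
    rcases Nat.eq_zero_or_pos i with h0 | hpos
    · subst h0; rw [hgp0, convUnit_ker x hx]; exact B.zero_mem
    · obtain ⟨j, rfl⟩ : ∃ j, i = j + 1 := ⟨i - 1, by omega⟩
      exact hgpB j x hx
  -- the geometric-series identities
  have hsum : ∀ n, S (n+1) = (∑ i ∈ Finset.range n, gp (i+1)) + gp 0 := by
    intro n
    rw [hS]
    exact Finset.sum_range_succ' (fun i => gp i) n
  have hgS : ∀ n, conv k A Δ g (S n) = S (n+1) - convUnit k A ε := by
    intro n
    have h2 : conv k A Δ g (S n) = ∑ i ∈ Finset.range n, gp (i+1) := by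
      rw [hS]
      show conv k A Δ g (∑ i ∈ Finset.range n, gp i) = _
      rw [conv_sum_right]
      exact Finset.sum_congr rfl fun i _ => rfl
    rw [h2, hsum, hgp0]
    abel
  have hSg : ∀ n, conv k A Δ (S n) g = S (n+1) - convUnit k A ε := by
    intro n
    have h2 : conv k A Δ (S n) g = ∑ i ∈ Finset.range n, gp (i+1) := by
      rw [hS]
      show conv k A Δ (∑ i ∈ Finset.range n, gp i) g = _
      rw [conv_sum_left]
      exact Finset.sum_congr rfl fun i _ => convPow_comm g i
    rw [h2, hsum, hgp0]
    abel
  refine ⟨fi, ?_, ?_, hfi1, hmem⟩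
  · ext x
    obtain ⟨s, hs⟩ := TensorProduct.exists_finset (Δ x)
    set n := max (Classical.choose (hT x))
      (s.sup (fun p => Classical.choose (hT p.2))) with hn
    have h1 : conv k A Δ f fi x = conv k A Δ f (S n) x := by
      rw [conv_apply, conv_apply, hs, map_sum, map_sum, map_sum, map_sum]
      refine Finset.sum_congr rfl ?_
      intro p hp
      simp only [TensorProduct.map_tmul, LinearMap.mul'_apply]
      have hle : Classical.choose (hT p.2) ≤ n := by
        rw [hn]
        exact le_trans (Finset.le_sup (f := fun p => Classical.choose (hT p.2)) hp)
          (le_max_right _ _)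
      rw [hfieq p.2 n hle]
    rw [h1, hf, conv_sub_left, conv_unit_left, hgS]
    simp only [LinearMap.sub_apply]
    have e1 : S n x = S (n+1) x := by
      rw [Classical.choose_spec (hT x) n (le_max_left _ _),
        Classical.choose_spec (hT x) (n+1) (le_trans (le_max_left _ _) (Nat.le_succ n))]
    rw [← e1]
    abel
  · ext x
    obtain ⟨s, hs⟩ := TensorProduct.exists_finset (Δ x)
    set n := max (Classical.choose (hT x))
      (s.sup (fun p => Classical.choose (hT p.1))) with hn
    have h1 : conv k A Δ fi f x = conv k A Δ (S n) f x := by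
      rw [conv_apply, conv_apply, hs, map_sum, map_sum, map_sum, map_sum]
      refine Finset.sum_congr rfl ?_
      intro p hp
      simp only [TensorProduct.map_tmul, LinearMap.mul'_apply]
      have hle : Classical.choose (hT p.1) ≤ n := by
        rw [hn]
        exact le_trans (Finset.le_sup (f := fun p => Classical.choose (hT p.1)) hp)
          (le_max_right _ _)
      rw [hfieq p.1 n hle]
    rw [h1, hf, conv_sub_right, conv_unit_right, hSg]
    simp only [LinearMap.sub_apply]
    have e1 : S n x = S (n+1) x := by
      rw [Classical.choose_spec (hT x) n (le_max_left _ _),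
        Classical.choose_spec (hT x) (n+1) (le_trans (le_max_left _ _) (Nat.le_succ n))]
    rw [← e1]
    abel

end Inv2
end QShPaper

namespace QShPaper
section Uniq
variable {k : Type*} [Field k] {H : Type*} [Ring H] [Bialgebra k H]
variable {A : Type*} [Ring A] [Algebra k A]

local notation "Δ" => (Coalgebra.comul (R := k) (A := H))
local notation "ε" => (Coalgebra.counit (R := k) (A := H))

lemma conv_ker_mem (B : Submodule k A) (hBmul : ∀ a ∈ B, ∀ b ∈ B, a * b ∈ B)
    (f g : H →ₗ[k] A) (hf1 : f 1 = 1) (hg1 : g 1 = 1)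
    (hf : ∀ x, ε x = 0 → f x ∈ B) (hg : ∀ x, ε x = 0 → g x ∈ B)
    (x : H) (hx : ε x = 0) : conv k A Δ f g x ∈ B := by
  rw [conv_eval_ker _ _ x hx, hf1, hg1, one_mul, mul_one]
  refine B.add_mem (B.add_mem (hg x hx) (hf x hx)) ?_
  have := redComul_mem_KK x hx
  refine Submodule.span_induction ?_ ?_ ?_ ?_ this
  · rintro t ⟨a, b, ⟨ha, hb⟩, rfl⟩
    simp only [TensorProduct.map_tmul, LinearMap.mul'_apply]
    exact hBmul _ (hf a ha) _ (hg b hb)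
  · simp only [map_zero]; exact B.zero_mem
  · intro u v _ _ hu hv; rw [map_add, map_add]; exact B.add_mem hu hv
  · intro c u _ hu; rw [map_smul, map_smul]; exact B.smul_mem c hu

lemma rangeP_mul (p : A →ₗ[k] A)
    (hRB : ∀ x y : A, p x * p y = p (x * p y) + p (p x * y) - p (x * y)) :
    ∀ a ∈ LinearMap.range p, ∀ b ∈ LinearMap.range p, a * b ∈ LinearMap.range p := by
  rintro a ⟨x, rfl⟩ b ⟨y, rfl⟩
  exact ⟨x * p y + p x * y - x * y, by rw [map_sub, map_add]; exact (hRB x y).symm⟩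

lemma rangePm_mul (p : A →ₗ[k] A)
    (hRB : ∀ x y : A, p x * p y = p (x * p y) + p (p x * y) - p (x * y)) :
    ∀ a ∈ LinearMap.range ((LinearMap.id : A →ₗ[k] A) - p),
      ∀ b ∈ LinearMap.range ((LinearMap.id : A →ₗ[k] A) - p),
        a * b ∈ LinearMap.range ((LinearMap.id : A →ₗ[k] A) - p) := by
  rintro a ⟨x, rfl⟩ b ⟨y, rfl⟩
  refine ⟨x * y - x * p y - p x * y, ?_⟩
  simp only [LinearMap.sub_apply, LinearMap.id_apply, map_sub]
  have expand : (x - p x) * (y - p y) = x * y - x * p y - p x * y + p x * p y := by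
    noncomm_ring
  rw [expand, hRB x y]
  abel

lemma rangeP_inter (p : A →ₗ[k] A) (hidem : p ∘ₗ p = p) (a : A)
    (hap : a ∈ LinearMap.range p)
    (ham : a ∈ LinearMap.range ((LinearMap.id : A →ₗ[k] A) - p)) : a = 0 := by
  obtain ⟨x, rfl⟩ := hap
  obtain ⟨y, hy⟩ := ham
  have h1 : p (p x) = p x := LinearMap.congr_fun hidem x
  have h2 : p (p x) = 0 := by
    rw [← hy]
    simp only [LinearMap.sub_apply, LinearMap.id_apply, map_sub]
    rw [show p (p y) = p y from LinearMap.congr_fun hidem y]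
    abel
  rw [← h1, h2]

set_option maxHeartbeats 1000000 in
lemma birkhoff_unique (hco : IsConilpotent k (1:H) Δ ε)
    (p : A →ₗ[k] A) (hidem : p ∘ₗ p = p)
    (hRB : ∀ x y : A, p x * p y = p (x * p y) + p (p x * y) - p (x * y))
    (φ f1 g1 f2 g2 : H →ₗ[k] A)
    (hf11 : f1 1 = 1) (hg11 : g1 1 = 1) (hf21 : f2 1 = 1) (hg21 : g2 1 = 1)
    (hf1m : ∀ x, ε x = 0 → f1 x ∈ LinearMap.range ((LinearMap.id : A →ₗ[k] A) - p))
    (hf2m : ∀ x, ε x = 0 → f2 x ∈ LinearMap.range ((LinearMap.id : A →ₗ[k] A) - p))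
    (hg1p : ∀ x, ε x = 0 → g1 x ∈ LinearMap.range p)
    (hg2p : ∀ x, ε x = 0 → g2 x ∈ LinearMap.range p)
    (h1 : conv k A Δ f1 φ = g1) (h2 : conv k A Δ f2 φ = g2) :
    f1 = f2 ∧ g1 = g2 := by
  obtain ⟨f2i, hf2i_r, hf2i_l, hf2i1, hf2iB⟩ := exists_conv_inverse hco f2 hf21
  obtain ⟨g2i, hg2i_r, hg2i_l, hg2i1, hg2iB⟩ := exists_conv_inverse hco g2 hg21
  have hφ : φ = conv k A Δ f2i g2 := by
    rw [← h2, ← conv_assoc, hf2i_l, conv_unit_left]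
  have hf2i_eq : f2i = conv k A Δ φ g2i := by
    rw [hφ, conv_assoc, hg2i_r, conv_unit_right]
  have hE : conv k A Δ f1 f2i = conv k A Δ g1 g2i := by
    rw [hf2i_eq, ← conv_assoc, h1]
  -- membership of the inverses
  have hf2im : ∀ x, ε x = 0 → f2i x ∈ LinearMap.range ((LinearMap.id : A →ₗ[k] A) - p) :=
    hf2iB _ (rangePm_mul p hRB) hf2m
  have hg2ip : ∀ x, ε x = 0 → g2i x ∈ LinearMap.range p :=
    hg2iB _ (rangeP_mul p hRB) hg2p
  have hEunit : conv k A Δ f1 f2i = convUnit k A ε := by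
    apply ext_from_one_ker
    · rw [conv_eval_one, hf11, hf2i1, one_mul, convUnit_one]
    · intro x hx
      have hm : conv k A Δ f1 f2i x ∈ LinearMap.range ((LinearMap.id : A →ₗ[k] A) - p) :=
        conv_ker_mem _ (rangePm_mul p hRB) f1 f2i hf11 hf2i1 hf1m hf2im x hx
      have hp : conv k A Δ f1 f2i x ∈ LinearMap.range p := by
        rw [hE]
        exact conv_ker_mem _ (rangeP_mul p hRB) g1 g2i hg11 hg2i1 hg1p hg2ip x hx
      rw [rangeP_inter p hidem _ hp hm, convUnit_ker x hx]
  have hf : f1 = f2 := by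
    have : conv k A Δ (conv k A Δ f1 f2i) f2 = f2 := by
      rw [hEunit, conv_unit_left]
    rw [conv_assoc, hf2i_l, conv_unit_right] at this
    exact this
  exact ⟨hf, by rw [← h1, ← h2, hf]⟩

end Uniq
end QShPaper

namespace QShPaper

section Words
variable {k : Type*} [Field k]
variable {A : Type*} [Ring A] [Algebra k A] {Q : Type*} [AddCommGroup Q] [Module k Q]

lemma ofWord_nil (M : QShModel k A Q) : M.ofWord [] = M.emp := rfl

lemma ofWord_cons (M : QShModel k A Q) (a : A) (l : List A) :
    M.ofWord (a :: l) = M.cons a (M.ofWord l) := rfl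

lemma comul_ofWord (M : QShModel k A Q) (w : List A) :
    M.comul (M.ofWord w) = ∑ i ∈ Finset.range (w.length + 1),
      M.ofWord (w.take i) ⊗ₜ[k] M.ofWord (w.drop i) := by
  induction w with
  | nil => simpa [QShModel.ofWord] using M.comul_emp
  | cons a v ih =>
      show M.comul (M.cons a (M.ofWord v)) = _
      rw [M.comul_cons, ih, map_sum]
      simp only [List.length_cons]
      rw [Finset.sum_range_succ'
        (fun i => M.ofWord ((a::v).take i) ⊗ₜ[k] M.ofWord ((a::v).drop i)) (v.length + 1)]
      rw [add_comm]
      congr 1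

lemma cons_mem_nspan (M : QShModel k A Q) (a : A) (u : Q) :
    M.cons a u ∈ Submodule.span k {z : Q | ∃ (b : A) (l : List A), z = M.ofWord (b :: l)} := by
  have hu : u ∈ Submodule.span k
      (Set.range fun w : List A => w.foldr (fun a u => M.cons a u) M.emp) := by
    rw [M.span_words]; trivial
  refine Submodule.span_induction ?_ ?_ ?_ ?_ hu
  · rintro z ⟨w, rfl⟩
    exact Submodule.subset_span ⟨a, w, rfl⟩
  · rw [map_zero]
    exact Submodule.zero_mem _
  · intro y z _ _ hy hz
    rw [map_add]
    exact Submodule.add_mem _ hy hz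
  · intro t y _ hy
    rw [map_smul]
    exact Submodule.smul_mem _ t hy

lemma lift_cons_mem_nspan {H : Type*} [AddCommGroup H] [Module k H]
    (M : QShModel k A Q) (c : H →ₗ[k] A) (t : H ⊗[k] Q) :
    TensorProduct.lift (M.cons ∘ₗ c) t ∈
      Submodule.span k {z : Q | ∃ (b : A) (l : List A), z = M.ofWord (b :: l)} := by
  induction t using TensorProduct.induction_on with
  | zero => rw [map_zero]; exact Submodule.zero_mem _
  | tmul a u =>
      simp only [TensorProduct.lift.tmul, LinearMap.comp_apply]
      exact cons_mem_nspan M (c a) u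
  | add s t hs ht => rw [map_add]; exact Submodule.add_mem _ hs ht

lemma tri_sum {Mo : Type*} [AddCommMonoid Mo] (g : ℕ → ℕ → Mo) (n : ℕ) :
    ∑ i ∈ Finset.range n, ∑ c ∈ Finset.range i, g c (i - 1 - c)
      = ∑ c ∈ Finset.range n, ∑ d ∈ Finset.range (n - 1 - c), g c d := by
  induction n with
  | zero => simp
  | succ n ih =>
      rw [Finset.sum_range_succ, ih]
      rw [Finset.sum_range_succ (fun c => ∑ d ∈ Finset.range (n + 1 - 1 - c), g c d) n]
      simp only [Nat.add_sub_cancel]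
      rw [show n - n = 0 from by omega, Finset.range_zero, Finset.sum_empty, add_zero]
      rw [← Finset.sum_add_distrib]
      refine Finset.sum_congr rfl fun c hc => ?_
      have hc' : c < n := Finset.mem_range.mp hc
      rw [show n - c = (n - 1 - c) + 1 by omega, Finset.sum_range_succ]

lemma square_sum {Mo : Type*} [AddCommMonoid Mo] (g : ℕ → ℕ → Mo) (m n : ℕ)
    (hv : ∀ c d, m < c ∨ m < d → g c d = 0) (hn : 2 * m + 2 ≤ n) :
    ∑ c ∈ Finset.range n, ∑ d ∈ Finset.range (n - 1 - c), g c d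
      = ∑ c ∈ Finset.range (m + 1), ∑ d ∈ Finset.range (m + 1), g c d := by
  have h1 : ∑ c ∈ Finset.range n, ∑ d ∈ Finset.range (n - 1 - c), g c d
      = ∑ c ∈ Finset.range (m + 1), ∑ d ∈ Finset.range (n - 1 - c), g c d := by
    refine (Finset.sum_subset (Finset.range_subset_range.mpr (by omega)) ?_).symm
    intro c _ hc
    have hmc : m < c := by
      have : ¬ c < m + 1 := fun h => hc (Finset.mem_range.mpr h)
      omega
    exact Finset.sum_eq_zero fun d _ => hv c d (Or.inl hmc)
  rw [h1]
  refine Finset.sum_congr rfl fun c hc => ?_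
  have hcm : c ≤ m := Nat.lt_succ_iff.mp (Finset.mem_range.mp hc)
  refine (Finset.sum_subset (Finset.range_subset_range.mpr (by omega)) ?_).symm
  intro d _ hd
  have hmd : m < d := by
    have : ¬ d < m + 1 := fun h => hd (Finset.mem_range.mpr h)
    omega
  exact hv c d (Or.inr hmd)

end Words
end QShPaper

namespace QShPaper

section MapsAdd
variable {k : Type*} [Field k]
variable {M N M' N' : Type*} [AddCommGroup M] [Module k M] [AddCommGroup N] [Module k N]
  [AddCommGroup M'] [Module k M'] [AddCommGroup N'] [Module k N']

lemma mapAddRight (f : M →ₗ[k] M') (g g' : N →ₗ[k] N') :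
    TensorProduct.map f (g + g') = TensorProduct.map f g + TensorProduct.map f g' :=
  TensorProduct.ext' fun x y => by simp [tmul_add]

lemma comp_add3_comp {U V W X : Type*} [AddCommGroup U] [Module k U] [AddCommGroup V]
    [Module k V] [AddCommGroup W] [Module k W] [AddCommGroup X] [Module k X]
    (L : W →ₗ[k] X) (F G K : V →ₗ[k] W) (R : U →ₗ[k] V) :
    L ∘ₗ (F + G + K) ∘ₗ R = (L ∘ₗ F) ∘ₗ R + (L ∘ₗ G) ∘ₗ R + (L ∘ₗ K) ∘ₗ R := by
  ext x; simp

lemma comp_sum_comp {ι : Type*} {U V W X : Type*} [AddCommGroup U] [Module k U]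
    [AddCommGroup V] [Module k V] [AddCommGroup W] [Module k W] [AddCommGroup X] [Module k X]
    (s : Finset ι) (F : ι → (V →ₗ[k] W)) (L : W →ₗ[k] X) (R : U →ₗ[k] V) :
    (L ∘ₗ (∑ i ∈ s, F i)) ∘ₗ R = ∑ i ∈ s, (L ∘ₗ F i) ∘ₗ R := by
  ext x
  simp [LinearMap.sum_apply]

end MapsAdd

section WcSec
variable {k : Type*} [Field k] {H : Type*} [Ring H] [Bialgebra k H]
variable {A : Type*} [Ring A] [Algebra k A] {Q : Type*} [AddCommGroup Q] [Module k Q]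

local notation "Δ" => (Coalgebra.comul (R := k) (A := H))
local notation "ε" => (Coalgebra.counit (R := k) (A := H))

/-- `W_n := (word of length n+1) ∘ Δ'^{[n+1]} : H → QSh(A)`. -/
noncomputable def Wc (M : QShModel k A Q) (c : H →ₗ[k] A) (n : ℕ) : H →ₗ[k] Q :=
  M.wordMap c n ∘ₗ redIter k (1:H) Δ n

lemma Wc_zero (M : QShModel k A Q) (c : H →ₗ[k] A) (x : H) :
    Wc M c 0 x = M.cons (c x) M.emp := by
  show (M.wordMap c 0) (redIter k (1:H) Δ 0 x) = _
  rw [show M.wordMap c 0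
      = ((M.cons ∘ₗ c).flip M.emp) ∘ₗ (toPow1 k).symm.toLinearMap from rfl,
    show redIter k (1:H) Δ 0 = (toPow1 (Q := H) k).toLinearMap from rfl]
  simp

lemma Wc_succ (M : QShModel k A Q) (c : H →ₗ[k] A) (n : ℕ) :
    Wc M c (n+1) = TensorProduct.lift (M.cons ∘ₗ c) ∘ₗ
      TensorProduct.map LinearMap.id (Wc M c n) ∘ₗ redComul k (1:H) Δ := by
  ext x
  show (M.wordMap c (n+1)) (redIter k (1:H) Δ (n+1) x) = _
  rw [show redIter k (1:H) Δ (n+1)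
      = (TensorPower.cast k H (show 1 + (n+1) = n+1+1 by omega)).toLinearMap ∘ₗ
        (TensorPower.mulEquiv (R := k) (M := H) (n := 1) (m := n+1)).toLinearMap ∘ₗ
          TensorProduct.map (toPow1 k).toLinearMap (redIter k (1:H) Δ n) ∘ₗ
            redComul k (1:H) Δ from rfl,
    show M.wordMap c (n+1)
      = TensorProduct.lift (M.cons ∘ₗ c) ∘ₗ
        TensorProduct.map (toPow1 k).symm.toLinearMap (M.wordMap c n) ∘ₗ
          (TensorPower.mulEquiv (R := k) (M := H) (n := 1) (m := n+1)).symm.toLinearMap ∘ₗ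
            (TensorPower.cast k H (show n+1+1 = 1+(n+1) by omega)).toLinearMap from rfl]
  simp only [LinearMap.comp_apply, LinearEquiv.coe_coe]
  rw [TensorPower.cast_cast, TensorPower.cast_refl, LinearEquiv.refl_apply,
    LinearEquiv.symm_apply_apply]
  rw [← LinearMap.comp_apply (TensorProduct.map _ _) (TensorProduct.map _ _),
    ← TensorProduct.map_comp]
  have hto : (toPow1 (Q := H) k).symm.toLinearMap ∘ₗ (toPow1 (Q := H) k).toLinearMap
      = LinearMap.id := by
    ext y; simp
  rw [hto]
  rfl

lemma Wc_mem_nspan (M : QShModel k A Q) (c : H →ₗ[k] A) (n : ℕ) (x : H) :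
    Wc M c n x ∈ Submodule.span k {z : Q | ∃ (b : A) (l : List A), z = M.ofWord (b :: l)} := by
  cases n with
  | zero =>
      rw [Wc_zero]
      exact Submodule.subset_span ⟨c x, [], rfl⟩
  | succ n =>
      rw [Wc_succ]
      exact lift_cons_mem_nspan M c _

/-- Prepend-a-letter operator `H ⊗ (Q ⊗ Q) → Q ⊗ Q`, `a ⊗ (u ⊗ v) ↦ (c(a)·u) ⊗ v`. -/
noncomputable def preA (M : QShModel k A Q) {H' : Type*} [AddCommGroup H'] [Module k H']
    (c : H' →ₗ[k] A) : H' ⊗[k] (Q ⊗[k] Q) →ₗ[k] Q ⊗[k] Q :=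
  TensorProduct.map (TensorProduct.lift (M.cons ∘ₗ c)) LinearMap.id ∘ₗ
    (TensorProduct.assoc k H' Q Q).symm.toLinearMap

lemma preA_tmul (M : QShModel k A Q) {H' : Type*} [AddCommGroup H'] [Module k H']
    (c : H' →ₗ[k] A) (a : H') (u v : Q) :
    preA M c (a ⊗ₜ[k] (u ⊗ₜ[k] v)) = (M.cons (c a) u) ⊗ₜ[k] v := by
  simp [preA]

lemma preA_tmul' (M : QShModel k A Q) {H' : Type*} [AddCommGroup H'] [Module k H']
    (c : H' →ₗ[k] A) (a : H') (t : Q ⊗[k] Q) :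
    preA M c (a ⊗ₜ[k] t) = TensorProduct.map (M.cons (c a)) LinearMap.id t := by
  induction t using TensorProduct.induction_on with
  | zero => rw [tmul_zero, map_zero, map_zero]
  | tmul u v => rw [preA_tmul]; simp
  | add s t hs ht => rw [tmul_add, map_add, map_add, hs, ht]

lemma comul_lift (M : QShModel k A Q) (c : H →ₗ[k] A) :
    M.comul ∘ₗ TensorProduct.lift (M.cons ∘ₗ c)
      = TensorProduct.mk k Q Q M.emp ∘ₗ TensorProduct.lift (M.cons ∘ₗ c)
        + preA M c ∘ₗ LinearMap.lTensor H M.comul := by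
  apply TensorProduct.ext'
  intro a u
  simp only [LinearMap.comp_apply, LinearMap.add_apply, TensorProduct.lift.tmul,
    LinearMap.lTensor_tmul, TensorProduct.mk_apply]
  rw [M.comul_cons, preA_tmul']

lemma map_id_eq_lTensor {P P' : Type*} [AddCommGroup P] [Module k P]
    [AddCommGroup P'] [Module k P'] (f : P →ₗ[k] P') :
    TensorProduct.map (LinearMap.id : H →ₗ[k] H) f = LinearMap.lTensor H f := rfl

lemma map_Wsucc (M : QShModel k A Q) (c : H →ₗ[k] A) (X Y : H →ₗ[k] Q) :
    TensorProduct.map (TensorProduct.lift (M.cons ∘ₗ c) ∘ₗ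
        TensorProduct.map LinearMap.id X ∘ₗ redComul k (1:H) Δ) Y ∘ₗ redComul k (1:H) Δ
      = preA M c ∘ₗ
          LinearMap.lTensor H (TensorProduct.map X Y ∘ₗ redComul k (1:H) Δ) ∘ₗ
            redComul k (1:H) Δ := by
  have e3 : TensorProduct.map (TensorProduct.lift (M.cons ∘ₗ c) ∘ₗ
        TensorProduct.map LinearMap.id X ∘ₗ redComul k (1:H) Δ) Y
      = TensorProduct.map (TensorProduct.lift (M.cons ∘ₗ c) ∘ₗ
          TensorProduct.map LinearMap.id X) Y ∘ₗ
            LinearMap.rTensor H (redComul k (1:H) Δ) := by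
    rw [LinearMap.rTensor, ← TensorProduct.map_comp, LinearMap.comp_assoc]
    simp
  have e4 : TensorProduct.map (TensorProduct.lift (M.cons ∘ₗ c) ∘ₗ
        TensorProduct.map LinearMap.id X) Y
      = preA M c ∘ₗ LinearMap.lTensor H (TensorProduct.map X Y) ∘ₗ
          (TensorProduct.assoc k H H H).toLinearMap := by
    apply TensorProduct.ext_threefold
    intro a b e
    simp only [LinearMap.comp_apply, TensorProduct.map_tmul, LinearMap.id_apply,
      LinearEquiv.coe_coe, assoc_tmul, LinearMap.lTensor_tmul, TensorProduct.lift.tmul]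
    rw [preA_tmul]
  ext x
  simp only [LinearMap.comp_apply]
  rw [LinearMap.congr_fun e3 (redComul k (1:H) Δ x)]
  simp only [LinearMap.comp_apply]
  rw [LinearMap.congr_fun e4 _]
  simp only [LinearMap.comp_apply, LinearEquiv.coe_coe]
  rw [show (TensorProduct.assoc k H H H)
      ((LinearMap.rTensor H (redComul k (1:H) Δ)) ((redComul k (1:H) Δ) x))
      = (LinearMap.lTensor H (redComul k (1:H) Δ)) ((redComul k (1:H) Δ) x) from
    LinearMap.congr_fun redComul_coassoc x]
  rw [LinearMap.lTensor_comp, LinearMap.comp_apply]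

set_option maxHeartbeats 1000000 in
lemma comul_Wc (M : QShModel k A Q) (c : H →ₗ[k] A) (n : ℕ) :
    M.comul ∘ₗ Wc M c n
      = TensorProduct.mk k Q Q M.emp ∘ₗ Wc M c n
        + (TensorProduct.mk k Q Q).flip M.emp ∘ₗ Wc M c n
        + ∑ i ∈ Finset.range n,
            TensorProduct.map (Wc M c i) (Wc M c (n-1-i)) ∘ₗ redComul k (1:H) Δ := by
  induction n with
  | zero =>
      rw [Finset.range_zero, Finset.sum_empty, add_zero]
      ext x
      simp only [LinearMap.comp_apply, LinearMap.add_apply, TensorProduct.mk_apply,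
        LinearMap.flip_apply]
      rw [Wc_zero, M.comul_cons, M.comul_emp]
      simp only [TensorProduct.map_tmul, LinearMap.id_apply]
      try rw [Wc_zero]
  | succ n ih =>
      rw [Wc_succ]
      have e1 : M.comul ∘ₗ (TensorProduct.lift (M.cons ∘ₗ c) ∘ₗ
          TensorProduct.map LinearMap.id (Wc M c n) ∘ₗ redComul k (1:H) Δ)
          = (M.comul ∘ₗ TensorProduct.lift (M.cons ∘ₗ c)) ∘ₗ
            TensorProduct.map LinearMap.id (Wc M c n) ∘ₗ redComul k (1:H) Δ := rfl
      rw [e1, comul_lift, LinearMap.add_comp]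
      have ecomp : LinearMap.lTensor H M.comul ∘ₗ TensorProduct.map LinearMap.id (Wc M c n)
          = TensorProduct.map LinearMap.id (M.comul ∘ₗ Wc M c n) := by
        rw [← map_id_eq_lTensor, ← TensorProduct.map_comp, LinearMap.id_comp]
      have e2 : (preA M c ∘ₗ LinearMap.lTensor H M.comul) ∘ₗ
          TensorProduct.map LinearMap.id (Wc M c n) ∘ₗ redComul k (1:H) Δ
          = preA M c ∘ₗ TensorProduct.map LinearMap.id (M.comul ∘ₗ Wc M c n) ∘ₗ
              redComul k (1:H) Δ := by
        ext x
        simp only [LinearMap.comp_apply]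
        rw [← LinearMap.comp_apply (LinearMap.lTensor H M.comul), ecomp]
      rw [e2, ih, mapAddRight, mapAddRight, mapSumRight, comp_add3_comp]
      -- piece A
      have pA : (preA M c ∘ₗ TensorProduct.map LinearMap.id
            (TensorProduct.mk k Q Q M.emp ∘ₗ Wc M c n))
          = TensorProduct.map (Wc M c 0) (Wc M c n) := by
        apply TensorProduct.ext'
        intro a b
        simp only [LinearMap.comp_apply, TensorProduct.map_tmul, LinearMap.id_apply,
          TensorProduct.mk_apply]
        rw [preA_tmul, Wc_zero]
      -- piece B
      have pB : (preA M c ∘ₗ TensorProduct.map LinearMap.id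
            ((TensorProduct.mk k Q Q).flip M.emp ∘ₗ Wc M c n))
          = ((TensorProduct.mk k Q Q).flip M.emp) ∘ₗ
              (TensorProduct.lift (M.cons ∘ₗ c) ∘ₗ
                TensorProduct.map LinearMap.id (Wc M c n)) := by
        apply TensorProduct.ext'
        intro a b
        simp only [LinearMap.comp_apply, TensorProduct.map_tmul, LinearMap.id_apply,
          LinearMap.flip_apply, TensorProduct.mk_apply, TensorProduct.lift.tmul]
        rw [preA_tmul]
      -- piece C
      have pc : ∀ i, (preA M c ∘ₗ TensorProduct.map LinearMap.id
            (TensorProduct.map (Wc M c i) (Wc M c (n-1-i)) ∘ₗ redComul k (1:H) Δ)) ∘ₗ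
              redComul k (1:H) Δ
          = TensorProduct.map (Wc M c (i+1)) (Wc M c (n-1-i)) ∘ₗ redComul k (1:H) Δ := by
        intro i
        have hW := map_Wsucc M c (Wc M c i) (Wc M c (n-1-i))
        rw [← Wc_succ] at hW
        rw [map_id_eq_lTensor, LinearMap.comp_assoc]
        exact hW.symm
      rw [comp_sum_comp]
      have hsum : ∑ i ∈ Finset.range n, (preA M c ∘ₗ TensorProduct.map LinearMap.id
            (TensorProduct.map (Wc M c i) (Wc M c (n-1-i)) ∘ₗ redComul k (1:H) Δ)) ∘ₗ
              redComul k (1:H) Δ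
          = ∑ i ∈ Finset.range n,
              TensorProduct.map (Wc M c (i+1)) (Wc M c (n-1-i)) ∘ₗ redComul k (1:H) Δ :=
        Finset.sum_congr rfl fun i _ => pc i
      rw [hsum, pA, pB]
      simp only [Nat.add_sub_cancel]
      have hre : ∑ i ∈ Finset.range (n+1),
            TensorProduct.map (Wc M c i) (Wc M c (n-i)) ∘ₗ redComul k (1:H) Δ
          = TensorProduct.map (Wc M c 0) (Wc M c n) ∘ₗ redComul k (1:H) Δ
            + ∑ i ∈ Finset.range n,
                TensorProduct.map (Wc M c (i+1)) (Wc M c (n-1-i)) ∘ₗ redComul k (1:H) Δ := by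
        rw [Finset.sum_range_succ'
          (fun i => TensorProduct.map (Wc M c i) (Wc M c (n-i)) ∘ₗ redComul k (1:H) Δ) n]
        rw [add_comm]
        congr 1
        refine Finset.sum_congr rfl fun i _ => ?_
        rw [show n - (i+1) = n - 1 - i from by omega]
      rw [hre]
      have hassoc1 : (TensorProduct.mk k Q Q M.emp ∘ₗ TensorProduct.lift (M.cons ∘ₗ c)) ∘ₗ
          TensorProduct.map LinearMap.id (Wc M c n) ∘ₗ redComul k (1:H) Δ
          = TensorProduct.mk k Q Q M.emp ∘ₗ TensorProduct.lift (M.cons ∘ₗ c) ∘ₗ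
            TensorProduct.map LinearMap.id (Wc M c n) ∘ₗ redComul k (1:H) Δ := by
        rw [LinearMap.comp_assoc]
      have hassoc2 : (((TensorProduct.mk k Q Q).flip M.emp) ∘ₗ
            (TensorProduct.lift (M.cons ∘ₗ c) ∘ₗ
              TensorProduct.map LinearMap.id (Wc M c n))) ∘ₗ redComul k (1:H) Δ
          = ((TensorProduct.mk k Q Q).flip M.emp) ∘ₗ
              TensorProduct.lift (M.cons ∘ₗ c) ∘ₗ
                TensorProduct.map LinearMap.id (Wc M c n) ∘ₗ redComul k (1:H) Δ := by
        rw [LinearMap.comp_assoc, LinearMap.comp_assoc]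
      rw [hassoc1, hassoc2]
      abel

end WcSec
end QShPaper

namespace QShPaper
section TL
variable {k : Type*} [Field k]
variable {A : Type*} [Ring A] [Algebra k A] {Q : Type*} [AddCommGroup Q] [Module k Q]

lemma square_extend {Mo : Type*} [AddCommMonoid Mo] (g : ℕ → ℕ → Mo) (m m' : ℕ)
    (h : m ≤ m') (hv : ∀ c d, m < c ∨ m < d → g c d = 0) :
    ∑ c ∈ Finset.range (m' + 1), ∑ d ∈ Finset.range (m' + 1), g c d
      = ∑ c ∈ Finset.range (m + 1), ∑ d ∈ Finset.range (m + 1), g c d := by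
  have h1 : ∀ c, ∑ d ∈ Finset.range (m' + 1), g c d
      = ∑ d ∈ Finset.range (m + 1), g c d := by
    intro c
    refine (Finset.sum_subset (Finset.range_subset_range.mpr (by omega)) ?_).symm
    intro d _ hd
    exact hv c d (Or.inr (by
      have : ¬ d < m + 1 := fun hh => hd (Finset.mem_range.mpr hh)
      omega))
  simp only [h1]
  refine (Finset.sum_subset (Finset.range_subset_range.mpr (by omega)) ?_).symm
  intro c _ hc
  refine Finset.sum_eq_zero fun d _ => hv c d (Or.inl (by
    have : ¬ c < m + 1 := fun hh => hc (Finset.mem_range.mpr hh)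
    omega))

lemma jword_long (M : QShModel k A Q) (j : Q →ₗ[k] A) (hj : M.IsJ j)
    (u : List A) (hu : 2 ≤ u.length) : j (M.ofWord u) = 0 := by
  match u, hu with
  | c1 :: c2 :: u', _ => exact hj.2.2 c1 c2 (M.ofWord u')

set_option maxHeartbeats 1000000 in
lemma T_lemma (M : QShModel k A Q) (j jp jm : Q →ₗ[k] A) (hj : M.IsJ j)
    (p : A →ₗ[k] A)
    (hjp1 : jp M.emp = 1)
    (hjp : ∀ (a : A) (l : List A),
      jp (M.ofWord (a :: l)) =
        ((-1 : k)) ^ l.length • p (rbChain' ((LinearMap.id : A →ₗ[k] A) - p) a l))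
    (hjm1 : jm M.emp = 1)
    (hjm : ∀ (a : A) (l : List A),
      jm (M.ofWord (a :: l)) =
        ((-1 : k)) ^ (l.length + 1) •
          ((LinearMap.id : A →ₗ[k] A) - p) (rbChain' ((LinearMap.id : A →ₗ[k] A) - p) a l)) :
    LinearMap.mul' k A ∘ₗ TensorProduct.map jm j ∘ₗ M.comul = jp := by
  apply LinearMap.ext_on M.span_words
  rintro u ⟨w, rfl⟩
  have hw : (fun w : List A => w.foldr (fun a u => M.cons a u) M.emp) w = M.ofWord w := rfl
  rw [hw]
  have hT : ∀ v : List A, (LinearMap.mul' k A ∘ₗ TensorProduct.map jm j ∘ₗ M.comul)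
      (M.ofWord v) = ∑ i ∈ Finset.range (v.length + 1),
        jm (M.ofWord (v.take i)) * j (M.ofWord (v.drop i)) := by
    intro v
    simp only [LinearMap.comp_apply]
    rw [comul_ofWord, map_sum, map_sum]
    refine Finset.sum_congr rfl fun i _ => ?_
    simp
  rw [hT]
  rcases w with _ | ⟨a, l⟩
  · simp only [List.length_nil, Finset.range_one, Finset.sum_singleton, List.take_nil,
      List.drop_nil]
    rw [ofWord_nil, hjm1, hj.1, one_mul, hjp1]
    simp
  rcases List.eq_nil_or_concat l with rfl | ⟨l₂, b, rfl⟩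
  · -- w = [a]
    have e : ∑ i ∈ Finset.range ((a :: ([] : List A)).length + 1),
        jm (M.ofWord ((a :: ([] : List A)).take i)) * j (M.ofWord ((a :: ([] : List A)).drop i))
        = jm (M.ofWord ([] : List A)) * j (M.ofWord [a])
          + jm (M.ofWord [a]) * j (M.ofWord ([] : List A)) := by
      rw [show (a :: ([] : List A)).length + 1 = 2 from rfl, Finset.sum_range_succ,
        Finset.sum_range_one]
      rfl
    rw [e, ofWord_nil, hjm1, hj.1, one_mul, mul_one, hjm a [], hjp a [],
      show M.ofWord [a] = M.cons a M.emp from rfl, hj.2.1]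
    simp only [List.length_nil, pow_zero, pow_one, one_smul, neg_smul,
      LinearMap.sub_apply, LinearMap.id_apply]
    rw [show rbChain' ((LinearMap.id : A →ₗ[k] A) - p) a [] = a from rfl]
    module
  · -- w = a :: (l₂ ++ [b])
    rw [List.concat_eq_append]
    set r := l₂.length with hr
    have hlen : (a :: (l₂ ++ [b])).length = r + 2 := by simp [hr]
    rw [hlen]
    rw [Finset.sum_range_succ, Finset.sum_range_succ]
    have hz : ∑ i ∈ Finset.range (r + 1),
        jm (M.ofWord ((a :: (l₂ ++ [b])).take i)) * j (M.ofWord ((a :: (l₂ ++ [b])).drop i))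
        = 0 := by
      refine Finset.sum_eq_zero fun i hi => ?_
      have hilen : 2 ≤ ((a :: (l₂ ++ [b])).drop i).length := by
        rw [List.length_drop, hlen]
        have := Finset.mem_range.mp hi
        omega
      rw [jword_long M j hj _ hilen, mul_zero]
    rw [hz, zero_add]
    -- the i = r+1 term
    have ht1 : (a :: (l₂ ++ [b])).take (r + 1) = a :: l₂ := by
      rw [List.take_succ_cons]
      congr 1
      rw [hr]
      exact List.take_left
    have hd1 : (a :: (l₂ ++ [b])).drop (r + 1) = [b] := by
      rw [List.drop_succ_cons, hr]
      exact List.drop_left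
    -- the i = r+2 term
    have ht2 : (a :: (l₂ ++ [b])).take (r + 2) = a :: (l₂ ++ [b]) := by
      apply List.take_of_length_le
      rw [hlen]
    have hd2 : (a :: (l₂ ++ [b])).drop (r + 2) = [] := by
      apply List.drop_eq_nil_of_le
      rw [hlen]
    rw [ht1, hd1, ht2, hd2]
    rw [show M.ofWord [b] = M.cons b M.emp from rfl, hj.2.1, ofWord_nil, hj.1, mul_one]
    rw [hjm a l₂, hjm a (l₂ ++ [b]), hjp a (l₂ ++ [b])]
    have hchain : rbChain' ((LinearMap.id : A →ₗ[k] A) - p) a (l₂ ++ [b])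
        = ((LinearMap.id : A →ₗ[k] A) - p) (rbChain' ((LinearMap.id : A →ₗ[k] A) - p) a l₂)
            * b := by
      unfold rbChain'
      rw [List.foldl_append]
      rfl
    set x := rbChain' ((LinearMap.id : A →ₗ[k] A) - p) a l₂ with hx
    set y := ((LinearMap.id : A →ₗ[k] A) - p) x * b with hy
    rw [hchain]
    simp only [List.length_append, List.length_singleton, ← hr, ← hx, ← hy]
    simp only [LinearMap.sub_apply, LinearMap.id_apply]
    rw [smul_mul_assoc]
    rw [show r + 1 + 1 = r + 2 from rfl]
    rw [pow_succ, pow_succ]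
    -- goal : (-1)^r * -1 * -1 • (y - p y) + (-1)^r * -1 • ((x - p x) * b) = (-1)^r * -1 • p y
    have hyx : (x - p x) * b = y := by rw [hy]; simp [LinearMap.sub_apply]
    rw [hyx]
    module

end TL
end QShPaper

namespace QShPaper
section ExtV
variable {k : Type*} [Field k] {H : Type*} [Ring H] [Bialgebra k H]
variable {V : Type*} [AddCommGroup V] [Module k V]

lemma ext_from_one_ker' (f g : H →ₗ[k] V) (h1 : f 1 = g 1)
    (hk : ∀ x, Coalgebra.counit (R := k) x = 0 → f x = g x) : f = g := by
  ext x
  have hx : x = Coalgebra.counit (R := k) x • (1 : H)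
      + (x - Coalgebra.counit (R := k) x • 1) := by abel
  rw [hx, map_add, map_add, map_smul, map_smul, h1, hk _ (counit_ker_sub x)]

end ExtV
end QShPaper

open QShPaper in
/-- Let `H` be a conilpotent bialgebra, `(A, p₊)` an idempotent
Rota–Baxter algebra of weight `−1`, and `φ ∈ U(H,A)`. With `(j₊, j₋)` the Birkhoff
decomposition of the universal element `j` (given by the explicit word formulas below) and
`Ψ = QSh(φ|_{H⁺}) ∘ ι`, the maps `φ₊ := j₊ ⊙ φ = j₊ ∘ₗ Ψ` and `φ₋ := j₋ ⊙ φ = j₋ ∘ₗ Ψ`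
satisfy `φ₋ * φ = φ₊`, `φ₊ ∈ U(H, A₊)`, `φ₋ ∈ U(H, A₋)`: they form the unique Birkhoff
decomposition of `φ`. -/
theorem stmt19_birkhoff_via_action
    (k : Type*) [Field k] [CharZero k]
    (H : Type*) [Ring H] [Bialgebra k H]
    (hconil : IsConilpotent k (1 : H) (Coalgebra.comul (R := k) (A := H))
      (Coalgebra.counit (R := k) (A := H)))
    (A : Type*) [Ring A] [Algebra k A]
    (p : A →ₗ[k] A) (hidem : p ∘ₗ p = p)
    (hRB : ∀ x y : A, p x * p y = p (x * p y) + p (p x * y) - p (x * y))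
    (Q : Type*) [AddCommGroup Q] [Module k Q]
    (M : QShModel k A Q) (j : Q →ₗ[k] A) (hj : M.IsJ j)
    -- `(j₊, j₋)`, given by the explicit word formulas
    (jp jm : Q →ₗ[k] A)
    (hjp1 : jp M.emp = 1)
    (hjp : ∀ (a : A) (l : List A),
      jp (M.ofWord (a :: l)) =
        ((-1 : k)) ^ l.length • p (rbChain' ((LinearMap.id : A →ₗ[k] A) - p) a l))
    (hjm1 : jm M.emp = 1)
    (hjm : ∀ (a : A) (l : List A),
      jm (M.ofWord (a :: l)) =
        ((-1 : k)) ^ (l.length + 1) •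
          ((LinearMap.id : A →ₗ[k] A) - p) (rbChain' ((LinearMap.id : A →ₗ[k] A) - p) a l))
    (φ : H →ₗ[k] A) (hφ1 : φ 1 = 1)
    -- `Ψ = QSh(φ|_{H⁺}) ∘ ι`
    (Ψ : H →ₗ[k] Q)
    (hΨ : M.IotaComp (1 : H) (Coalgebra.comul (R := k) (A := H))
      (Coalgebra.counit (R := k) (A := H)) φ Ψ) :
    -- `φ₊ = j₊ ⊙ φ ∈ U(H, A₊)` and `φ₋ = j₋ ⊙ φ ∈ U(H, A₋)`
    ((jp ∘ₗ Ψ) 1 = 1) ∧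
    ((jm ∘ₗ Ψ) 1 = 1) ∧
    (∀ h ∈ LinearMap.ker (Coalgebra.counit (R := k) (A := H)),
      (jp ∘ₗ Ψ) h ∈ LinearMap.range p) ∧
    (∀ h ∈ LinearMap.ker (Coalgebra.counit (R := k) (A := H)),
      (jm ∘ₗ Ψ) h ∈ LinearMap.range ((LinearMap.id : A →ₗ[k] A) - p)) ∧
    -- `φ₋ * φ = φ₊`
    conv k A (Coalgebra.comul (R := k) (A := H)) (jm ∘ₗ Ψ) φ = jp ∘ₗ Ψ ∧
    -- uniqueness: `(φ₊, φ₋)` is *the* Birkhoff decomposition of `φ`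
    (∀ ψp ψm : H →ₗ[k] A,
      ψp 1 = 1 → ψm 1 = 1 →
      (∀ h ∈ LinearMap.ker (Coalgebra.counit (R := k) (A := H)),
        ψp h ∈ LinearMap.range p) →
      (∀ h ∈ LinearMap.ker (Coalgebra.counit (R := k) (A := H)),
        ψm h ∈ LinearMap.range ((LinearMap.id : A →ₗ[k] A) - p)) →
      conv k A (Coalgebra.comul (R := k) (A := H)) ψm φ = ψp →
      ψp = jp ∘ₗ Ψ ∧ ψm = jm ∘ₗ Ψ) := by
  classical
  obtain ⟨hΨ1, hΨ2⟩ := hΨ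
  -- representation of Ψ by the word components `Wc M φ i`
  have hrep : ∀ x : H, Coalgebra.counit (R := k) x = 0 →
      ∃ N, (∀ n, N ≤ n → Ψ x = ∑ i ∈ Finset.range (n+1), Wc M φ i x) ∧
        (Ψ x = ∑ i ∈ Finset.range (N+1), Wc M φ i x) ∧
        (∀ i, N < i → Wc M φ i x = 0) := by
    intro x hx
    obtain ⟨N, hN⟩ := hΨ2 x (LinearMap.mem_ker.mpr hx)
    have hWi : ∀ n, N ≤ n → Ψ x = ∑ i ∈ Finset.range (n+1), Wc M φ i x := by
      intro n hn
      rw [hN n hn]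
      rfl
    refine ⟨N, hWi, hWi N le_rfl, ?_⟩
    intro i hi
    have h1 := hWi (i-1) (by omega)
    have h2 := hWi i (by omega)
    rw [show i - 1 + 1 = i from by omega] at h1
    rw [Finset.sum_range_succ] at h2
    exact (left_eq_add.mp (h1.symm.trans h2))
  -- NSpan facts
  have hΨNS : ∀ x : H, Coalgebra.counit (R := k) x = 0 →
      Ψ x ∈ Submodule.span k {z : Q | ∃ (b : A) (l : List A), z = M.ofWord (b :: l)} := by
    intro x hx
    obtain ⟨N, _, hrepN, _⟩ := hrep x hx
    rw [hrepN]
    exact Submodule.sum_mem _ fun i _ => Wc_mem_nspan M φ i x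
  have hjpNS : ∀ z ∈ Submodule.span k {z : Q | ∃ (b : A) (l : List A), z = M.ofWord (b :: l)},
      jp z ∈ LinearMap.range p := by
    intro z hz
    refine Submodule.span_induction ?_ ?_ ?_ ?_ hz
    · rintro t ⟨b, l, rfl⟩
      rw [hjp b l]
      exact Submodule.smul_mem _ _ ⟨_, rfl⟩
    · rw [map_zero]; exact Submodule.zero_mem _
    · intro u v _ _ hu hv; rw [map_add]; exact Submodule.add_mem _ hu hv
    · intro c u _ hu; rw [map_smul]; exact Submodule.smul_mem _ c hu
  have hjmNS : ∀ z ∈ Submodule.span k {z : Q | ∃ (b : A) (l : List A), z = M.ofWord (b :: l)},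
      jm z ∈ LinearMap.range ((LinearMap.id : A →ₗ[k] A) - p) := by
    intro z hz
    refine Submodule.span_induction ?_ ?_ ?_ ?_ hz
    · rintro t ⟨b, l, rfl⟩
      rw [hjm b l]
      exact Submodule.smul_mem _ _ ⟨_, rfl⟩
    · rw [map_zero]; exact Submodule.zero_mem _
    · intro u v _ _ hu hv; rw [map_add]; exact Submodule.add_mem _ hu hv
    · intro c u _ hu; rw [map_smul]; exact Submodule.smul_mem _ c hu
  have part1 : (jp ∘ₗ Ψ) 1 = 1 := by
    simp only [LinearMap.comp_apply]; rw [hΨ1, hjp1]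
  have part2 : (jm ∘ₗ Ψ) 1 = 1 := by
    simp only [LinearMap.comp_apply]; rw [hΨ1, hjm1]
  have part3 : ∀ h ∈ LinearMap.ker (Coalgebra.counit (R := k) (A := H)),
      (jp ∘ₗ Ψ) h ∈ LinearMap.range p := by
    intro h hh
    exact hjpNS _ (hΨNS h (LinearMap.mem_ker.mp hh))
  have part4 : ∀ h ∈ LinearMap.ker (Coalgebra.counit (R := k) (A := H)),
      (jm ∘ₗ Ψ) h ∈ LinearMap.range ((LinearMap.id : A →ₗ[k] A) - p) := by
    intro h hh
    exact hjmNS _ (hΨNS h (LinearMap.mem_ker.mp hh))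
  -- `j ∘ Ψ = φ`
  have hjconsNS : ∀ (aa : A) (u : Q),
      u ∈ Submodule.span k {z : Q | ∃ (b : A) (l : List A), z = M.ofWord (b :: l)} →
      j (M.cons aa u) = 0 := by
    intro aa u hu
    refine Submodule.span_induction ?_ ?_ ?_ ?_ hu
    · rintro t ⟨b, l, rfl⟩
      exact hj.2.2 aa b (M.ofWord l)
    · rw [map_zero, map_zero]
    · intro y z _ _ hy hz
      rw [map_add, map_add, hy, hz, add_zero]
    · intro t y _ hy
      rw [map_smul, map_smul, hy, smul_zero]
  have hjWpos : ∀ (i : ℕ) (x : H), j (Wc M φ (i+1) x) = 0 := by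
    intro i x
    rw [LinearMap.congr_fun (Wc_succ M φ i) x]
    simp only [LinearMap.comp_apply]
    generalize (redComul k (1:H) (Coalgebra.comul (R := k)) x) = s
    induction s using TensorProduct.induction_on with
    | zero => simp
    | tmul a b =>
        simp only [TensorProduct.map_tmul, LinearMap.id_apply, TensorProduct.lift.tmul,
          LinearMap.comp_apply]
        exact hjconsNS (φ a) _ (Wc_mem_nspan M φ i b)
    | add u v hu hv => rw [map_add, map_add, map_add, hu, hv, add_zero]
  have hjΨ : j ∘ₗ Ψ = φ := by
    apply ext_from_one_ker'
    · simp only [LinearMap.comp_apply]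
      rw [hΨ1, hj.1, hφ1]
    · intro x hx
      obtain ⟨N, _, hrepN, _⟩ := hrep x hx
      simp only [LinearMap.comp_apply]
      rw [hrepN, map_sum]
      rw [Finset.sum_eq_single_of_mem 0 (Finset.mem_range.mpr (by omega))
        (fun i _ hi => by
          obtain ⟨i', rfl⟩ : ∃ i', i = i' + 1 := ⟨i - 1, by omega⟩
          exact hjWpos i' x)]
      rw [Wc_zero M φ x, hj.2.1]
  -- `Ψ` is a coalgebra morphism
  have hmor : M.comul ∘ₗ Ψ = TensorProduct.map Ψ Ψ ∘ₗ (Coalgebra.comul (R := k)) := by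
    apply ext_from_one_ker'
    · simp only [LinearMap.comp_apply]
      rw [hΨ1, M.comul_emp, Bialgebra.comul_one, Algebra.TensorProduct.one_def]
      simp [hΨ1]
    · intro x hx
      have hKK := redComul_mem_KK x hx
      have hR : ∃ m, (∀ c d, (m < c ∨ m < d) →
            TensorProduct.map (Wc M φ c) (Wc M φ d)
              (redComul k (1:H) (Coalgebra.comul (R := k)) x) = 0) ∧
          TensorProduct.map Ψ Ψ (redComul k (1:H) (Coalgebra.comul (R := k)) x)
            = ∑ c ∈ Finset.range (m+1), ∑ d ∈ Finset.range (m+1),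
                TensorProduct.map (Wc M φ c) (Wc M φ d)
                  (redComul k (1:H) (Coalgebra.comul (R := k)) x) := by
        have key : ∀ t ∈ Submodule.span k {t : H ⊗[k] H | ∃ a b,
            (Coalgebra.counit (R := k) a = 0 ∧ Coalgebra.counit (R := k) b = 0) ∧
              t = a ⊗ₜ[k] b},
            ∃ m, (∀ c d, (m < c ∨ m < d) →
                TensorProduct.map (Wc M φ c) (Wc M φ d) t = 0) ∧
              TensorProduct.map Ψ Ψ t
                = ∑ c ∈ Finset.range (m+1), ∑ d ∈ Finset.range (m+1),
                    TensorProduct.map (Wc M φ c) (Wc M φ d) t := by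
          intro t ht
          refine Submodule.span_induction ?_ ?_ ?_ ?_ ht
          · rintro t ⟨aa, bb, ⟨ha, hb⟩, rfl⟩
            obtain ⟨Na, hNa, _, hvana⟩ := hrep aa ha
            obtain ⟨Nb, hNb, _, hvanb⟩ := hrep bb hb
            refine ⟨max Na Nb, ?_, ?_⟩
            · intro c d hcd
              simp only [TensorProduct.map_tmul]
              rcases hcd with hc | hd
              · rw [hvana c (by omega), TensorProduct.zero_tmul]
              · rw [hvanb d (by omega), TensorProduct.tmul_zero]
            · simp only [TensorProduct.map_tmul]
              rw [hNa (max Na Nb) (le_max_left _ _), hNb (max Na Nb) (le_max_right _ _)]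
              rw [TensorProduct.sum_tmul]
              refine Finset.sum_congr rfl fun c _ => ?_
              rw [TensorProduct.tmul_sum]
          · exact ⟨0, fun c d _ => by rw [map_zero], by simp⟩
          · rintro u v _ _ ⟨m1, hv1, he1⟩ ⟨m2, hv2, he2⟩
            refine ⟨max m1 m2, ?_, ?_⟩
            · intro c d hcd
              rw [map_add, hv1 c d (by omega), hv2 c d (by omega), add_zero]
            · rw [map_add, he1, he2]
              rw [← square_extend (fun c d => TensorProduct.map (Wc M φ c) (Wc M φ d) u)
                m1 (max m1 m2) (le_max_left _ _) hv1]
              rw [← square_extend (fun c d => TensorProduct.map (Wc M φ c) (Wc M φ d) v)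
                m2 (max m1 m2) (le_max_right _ _) hv2]
              rw [← Finset.sum_add_distrib]
              refine Finset.sum_congr rfl fun c _ => ?_
              rw [← Finset.sum_add_distrib]
              refine Finset.sum_congr rfl fun d _ => ?_
              rw [map_add]
          · rintro cc u _ ⟨m, hv, he⟩
            refine ⟨m, fun c d hcd => by rw [map_smul, hv c d hcd, smul_zero], ?_⟩
            rw [map_smul, he, Finset.smul_sum]
            refine Finset.sum_congr rfl fun c _ => ?_
            rw [Finset.smul_sum]
            refine Finset.sum_congr rfl fun d _ => ?_
            rw [map_smul]
        exact key _ hKK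
      obtain ⟨m, hvan, heq⟩ := hR
      obtain ⟨Nx, hNx, _, _⟩ := hrep x hx
      simp only [LinearMap.comp_apply]
      rw [hNx (max Nx (2*m + 2)) (le_max_left _ _)]
      rw [map_sum]
      have hcw : ∀ i, M.comul (Wc M φ i x)
          = M.emp ⊗ₜ[k] (Wc M φ i x) + (Wc M φ i x) ⊗ₜ[k] M.emp
            + ∑ c ∈ Finset.range i, TensorProduct.map (Wc M φ c) (Wc M φ (i-1-c))
                (redComul k (1:H) (Coalgebra.comul (R := k)) x) := by
        intro i
        have h := LinearMap.congr_fun (comul_Wc M φ i) x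
        simpa only [LinearMap.comp_apply, LinearMap.add_apply, LinearMap.sum_apply,
          TensorProduct.mk_apply, LinearMap.flip_apply] using h
      simp only [hcw]
      rw [Finset.sum_add_distrib, Finset.sum_add_distrib]
      have hΔ : (Coalgebra.comul (R := k)) x = 1 ⊗ₜ[k] x + x ⊗ₜ[k] (1:H)
          + redComul k (1:H) (Coalgebra.comul (R := k)) x := by
        rw [redComul_apply]; abel
      rw [hΔ, map_add, map_add]
      simp only [TensorProduct.map_tmul]
      rw [hΨ1, hNx (max Nx (2*m + 2)) (le_max_left _ _)]
      rw [heq]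
      rw [← TensorProduct.tmul_sum, ← TensorProduct.sum_tmul]
      congr 1
      -- remaining: the double sums agree
      rw [tri_sum (fun c d => TensorProduct.map (Wc M φ c) (Wc M φ d)
        (redComul k (1:H) (Coalgebra.comul (R := k)) x)) (max Nx (2*m + 2) + 1)]
      rw [square_sum (fun c d => TensorProduct.map (Wc M φ c) (Wc M φ d)
        (redComul k (1:H) (Coalgebra.comul (R := k)) x)) m (max Nx (2*m + 2) + 1) hvan
        (by omega)]
  -- `φ₋ * φ = φ₊`
  have part5 : conv k A (Coalgebra.comul (R := k)) (jm ∘ₗ Ψ) φ = jp ∘ₗ Ψ := by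
    have hT := T_lemma M j jp jm hj p hjp1 hjp hjm1 hjm
    ext x
    rw [conv_apply, ← hjΨ]
    rw [show TensorProduct.map (jm ∘ₗ Ψ) (j ∘ₗ Ψ)
        = TensorProduct.map jm j ∘ₗ TensorProduct.map Ψ Ψ from TensorProduct.map_comp _ _ _ _]
    simp only [LinearMap.comp_apply]
    have hm := LinearMap.congr_fun hmor x
    simp only [LinearMap.comp_apply] at hm
    rw [← hm]
    have ht := LinearMap.congr_fun hT (Ψ x)
    simp only [LinearMap.comp_apply] at ht
    exact ht
  refine ⟨part1, part2, part3, part4, part5, ?_⟩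
  intro ψp ψm hψp1 hψm1 hψpP hψmP hconv
  have hb := birkhoff_unique hconil p hidem hRB φ ψm ψp (jm ∘ₗ Ψ) (jp ∘ₗ Ψ)
    hψm1 hψp1 part2 part1
    (fun x hx => hψmP x (LinearMap.mem_ker.mpr hx))
    (fun x hx => part4 x (LinearMap.mem_ker.mpr hx))
    (fun x hx => hψpP x (LinearMap.mem_ker.mpr hx))
    (fun x hx => part3 x (LinearMap.mem_ker.mpr hx))
    hconv part5
  exact ⟨hb.2, hb.1⟩
end
end
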